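/- Let τ be an interval pattern and let f_τ = f_P be a P-linear map, where P is a periodic orbit of f_P with pattern τ. If Q = {q_0, q_1, …, q_{n−1}} is a periodic orbit of f_τ with pattern ν ≠ τ, then there exists a unique loop α in the P-signed Markov graph of f_P associated to q_0; moreover, α is simple. -/

import Mathlib

open Dynamics Set

noncomputable section

/-- The circle `S¹ = ℝ/ℤ`. -/
abbrev S1 : Type := AddCircle (1 : ℝ)

/-- The unit interval `I = [0,1]` as a type. -/
abbrev II : Type := Set.Icc (0 : ℝ) 1

/-- The cylinder `Ω = S¹ × I`. -/
abbrev Cyl : Type := S1 × II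

/-- The fiber of a subset of the cylinder over `θ ∈ S¹`. -/
def fiber (A : Set Cyl) (θ : S1) : Set II := {x : II | (θ, x) ∈ A}

/-- `M_A θ = max {x ∈ I : (θ, x) ∈ A}`. -/
def MA (A : Set Cyl) (θ : S1) : ℝ := sSup (Subtype.val '' fiber A θ)

/-- `m_A θ = min {x ∈ I : (θ, x) ∈ A}`. -/
def mA (A : Set Cyl) (θ : S1) : ℝ := sInf (Subtype.val '' fiber A θ)

/-- A strip: a closed set projecting onto all of `S¹` whose fibers over a residual
set of `θ`'s are (possibly degenerate) nonempty closed intervals. -/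
def IsStrip (A : Set Cyl) : Prop :=
  IsClosed A ∧ (∀ θ : S1, ∃ x : II, (θ, x) ∈ A) ∧
    ∃ G ∈ residual S1, ∀ θ ∈ G, ∃ a b : II, a ≤ b ∧ fiber A θ = Set.Icc a b

/-- `A < B` for strips. -/
def stripLT (A B : Set Cyl) : Prop := ∃ G ∈ residual S1, ∀ θ ∈ G, MA A θ < mA B θ

/-- `A ≤ B` for strips. -/
def stripLE (A B : Set Cyl) : Prop := ∃ G ∈ residual S1, ∀ θ ∈ G, MA A θ ≤ mA B θ

/-- Two strips are ordered if `A < B` or `B < A`. -/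
def StripOrdered (A B : Set Cyl) : Prop := stripLT A B ∨ stripLT B A

/-- Two strips are weakly ordered if `A ≤ B` or `B ≤ A`. -/
def StripWeaklyOrdered (A B : Set Cyl) : Prop := stripLE A B ∨ stripLE B A

/-- The class `S(Ω)` of quasiperiodically forced skew-products on the cylinder:
continuous maps whose first coordinate is an irrational rotation. -/
def IsQPF (F : Cyl → Cyl) : Prop :=
  Continuous F ∧ ∃ ω : ℝ, Irrational ω ∧ ∀ p : Cyl, (F p).1 = p.1 + (ω : S1)

/-- `B` is an `n`-periodic strip of `F`: `F^n(B) = B` and the iterates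
`B, F(B), …, F^{n-1}(B)` are pairwise disjoint and pairwise ordered. -/
def IsPeriodicStripOrbit (F : Cyl → Cyl) (n : ℕ) (B : Set Cyl) : Prop :=
  IsStrip B ∧ F^[n] '' B = B ∧
    ∀ i j : ℕ, i < j → j < n →
      Disjoint (F^[i] '' B) (F^[j] '' B) ∧ StripOrdered (F^[i] '' B) (F^[j] '' B)

/-- A cyclic permutation: the (forward) orbit of any point is everything. -/
def IsCyclicPerm {n : ℕ} (τ : Equiv.Perm (Fin n)) : Prop :=
  ∀ i j : Fin n, ∃ k : ℕ, (τ ^ k) i = j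

/-- `F` exhibits the strips pattern `τ`: it has a periodic orbit of strips,
spatially labelled, moved around according to `τ`. -/
def ExhibitsStripPattern (F : Cyl → Cyl) {n : ℕ} (τ : Equiv.Perm (Fin n)) : Prop :=
  ∃ B : Fin n → Set Cyl,
    (∀ i, IsStrip (B i)) ∧
    (∀ i j : Fin n, i < j → stripLT (B i) (B j)) ∧
    (Pairwise fun i j => Disjoint (B i) (B j)) ∧
    (∀ i, F '' B i = B (τ i))

/-- A continuous interval map has a periodic orbit with interval pattern `τ`. -/
def HasIntervalPattern (f : II → II) {n : ℕ} (τ : Equiv.Perm (Fin n)) : Prop :=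
  ∃ p : Fin n → II, StrictMono p ∧ ∀ i, f (p i) = p (τ i)

/-- `τ` forces `ν` as interval patterns. -/
def ForcesI {n m : ℕ} (τ : Equiv.Perm (Fin n)) (ν : Equiv.Perm (Fin m)) : Prop :=
  ∀ f : II → II, Continuous f → HasIntervalPattern f τ → HasIntervalPattern f ν

/-- `τ` forces `ν` in `Ω`. -/
def ForcesOmega {n m : ℕ} (τ : Equiv.Perm (Fin n)) (ν : Equiv.Perm (Fin m)) : Prop :=
  ∀ F : Cyl → Cyl, IsQPF F → ExhibitsStripPattern F τ → ExhibitsStripPattern F ν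

/-- `p >_Sh q` in the Sharkovskiĭ ordering. -/
def SharkGT (p q : ℕ) : Prop :=
  ∃ i m j l : ℕ, Odd m ∧ Odd l ∧ p = 2 ^ i * m ∧ q = 2 ^ j * l ∧
    ((m = 1 ∧ l = 1 ∧ j < i) ∨ (1 < m ∧ l = 1) ∨
      (1 < m ∧ 1 < l ∧ (i < j ∨ (i = j ∧ m < l))))

/-- The core of a subset of the cylinder. -/
def core (M : Set Cyl) : Set Cyl :=
  ⋂ (G : Set S1) (_ : G ∈ residual S1), closure (M ∩ Prod.fst ⁻¹' G)

/-- A band is a strip equal to its core. -/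
def IsBand (A : Set Cyl) : Prop := IsStrip A ∧ core A = A

/-- Continuity points of a real-valued function on the circle. -/
def contPts (g : S1 → ℝ) : Set S1 := {θ | ContinuousAt g θ}

/-- The top cover `A⁺` of a strip: the closure of the graph of `M_A` restricted to its
residual set of continuity points. -/
def topCover (A : Set Cyl) : Set Cyl :=
  closure {p : Cyl | p.1 ∈ contPts (MA A) ∧ (p.2 : ℝ) = MA A p.1}

/-- The bottom cover `A⁻` of a strip. -/
def botCover (A : Set Cyl) : Set Cyl :=
  closure {p : Cyl | p.1 ∈ contPts (mA A) ∧ (p.2 : ℝ) = mA A p.1}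

/-- `A` positively `F`-covers `B`. -/
def FCoversPos (F : Cyl → Cyl) (A B : Set Cyl) : Prop :=
  stripLE (F '' botCover A) (botCover B) ∧ stripLE (topCover B) (F '' topCover A)

/-- `A` negatively `F`-covers `B`. -/
def FCoversNeg (F : Cyl → Cyl) (A B : Set Cyl) : Prop :=
  stripLE (topCover B) (F '' botCover A) ∧ stripLE (F '' topCover A) (botCover B)

/-- `A` `F`-covers `B`. -/
def FCovers (F : Cyl → Cyl) (A B : Set Cyl) : Prop := FCoversPos F A B ∨ FCoversNeg F A B

/-- An `s`-horseshoe `(J, D)` for `F`. -/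
def IsHorseshoe (F : Cyl → Cyl) (s : ℕ) (J : Set Cyl) (D : Finset (Set Cyl)) : Prop :=
  2 ≤ s ∧ D.card = s ∧ IsBand J ∧
    (∀ L ∈ D, IsBand L ∧ (interior L).Nonempty ∧ FCovers F L J) ∧
    (∀ L ∈ D, ∀ L' ∈ D, L ≠ L' → StripWeaklyOrdered L L')

/-- Topological entropy (cover entropy of the whole space). -/
def hTop {X : Type} [UniformSpace X] (F : X → X) : EReal := coverEntropy F Set.univ

/-- A pseudo-curve: the closure of the graph of a continuous map from a residual
subset of the circle to the interval. -/
def IsPseudoCurve (A : Set Cyl) : Prop :=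
  ∃ G ∈ residual S1, ∃ φ : S1 → II, Continuous (G.restrict φ) ∧
    A = closure {p : Cyl | p.1 ∈ G ∧ p.2 = φ p.1}

/-- The band `E_{AB}` between two pseudo-curves `A < B`. -/
def bandBetween (A B : Set Cyl) : Set Cyl :=
  closure {p : Cyl | p.1 ∈ contPts (MA A) ∧ p.1 ∈ contPts (mA B) ∧
    MA A p.1 < (p.2 : ℝ) ∧ (p.2 : ℝ) < mA B p.1}

/-- `f` is affine on the subinterval `[a, b]` of `I`. -/
def AffineOnIcc (f : II → II) (a b : II) : Prop :=
  ∀ x : II, a ≤ x → x ≤ b →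
    ((b : ℝ) - (a : ℝ)) * ((f x : ℝ) - (f a : ℝ)) =
      ((x : ℝ) - (a : ℝ)) * ((f b : ℝ) - (f a : ℝ))

/-- `f` is the `P`-linear (connect-the-dots) map over the points `p 0 < p 1 < … < p n`:
continuous, affine on each `[p i, p (i+1)]` and constant on both components of
`I ∖ [p 0, p n]`. -/
def IsPLinear {n : ℕ} (f : II → II) (p : Fin (n + 1) → II) : Prop :=
  Continuous f ∧
    (∀ k : Fin n, AffineOnIcc f (p k.castSucc) (p k.succ)) ∧
    (∀ x : II, x ≤ p 0 → f x = f (p 0)) ∧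
    (∀ x : II, p (Fin.last n) ≤ x → f x = f (p (Fin.last n)))

/-- Signed arrow between basic intervals `J_k = [p k, p (k+1)]` and `J_l` in the
`P`-signed Markov graph of `f` (`true` = positive covering, `false` = negative). -/
def IArrow {n : ℕ} (f : II → II) (p : Fin (n + 1) → II) (s : Bool) (k l : Fin n) : Prop :=
  if s then
    (f (p k.castSucc) : ℝ) ≤ (p l.castSucc : ℝ) ∧ (p l.succ : ℝ) ≤ (f (p k.succ) : ℝ)
  else
    (f (p k.succ) : ℝ) ≤ (p l.castSucc : ℝ) ∧ (p l.succ : ℝ) ≤ (f (p k.castSucc) : ℝ)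

/-- A loop of length `m` in the `P`-signed Markov graph of `f`, encoded as `m`-periodic
sequences of vertices (basic intervals) and signs. -/
def IsILoop {n : ℕ} (f : II → II) (p : Fin (n + 1) → II) (m : ℕ)
    (v : ℕ → Fin n) (s : ℕ → Bool) : Prop :=
  0 < m ∧ (∀ i, v (i + m) = v i) ∧ (∀ i, s (i + m) = s i) ∧
    ∀ i, IArrow f p (s i) (v i) (v (i + 1))

/-- A periodic point `x` of (exact) period `m` is associated to the loop with vertex
sequence `v` if `f^i(x) ∈ J_{v i}` for all `i`. -/
def IAssocPt {n : ℕ} (f : II → II) (p : Fin (n + 1) → II) (m : ℕ)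
    (x : II) (v : ℕ → Fin n) : Prop :=
  f^[m] x = x ∧ (∀ i : ℕ, 0 < i → i < m → f^[i] x ≠ x) ∧
    ∀ i : ℕ, p (v i).castSucc ≤ f^[i] x ∧ f^[i] x ≤ p (v i).succ

/-- The sign (`true` = `+`) of the initial segment of length `k` of a signed path. -/
def signAt (s : ℕ → Bool) (k : ℕ) : Bool :=
  decide (Even ((Finset.range k).filter (fun i => s i = false)).card)

/-- Lexicographic ordering of (infinite liftings of) signed paths, comparing the vertex
sequences `v` and `w`; at the first difference the comparison is reversed iff the sign
of the common initial segment is negative. -/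
def seqLT {n : ℕ} (v : ℕ → Fin n) (s : ℕ → Bool) (w : ℕ → Fin n) : Prop :=
  ∃ k : ℕ, (∀ i < k, v i = w i) ∧ v k ≠ w k ∧ (v k < w k ↔ signAt s k = true)

/-- The shift of a sequence by `i`. -/
def shiftSeq {α : Type} (v : ℕ → α) (i : ℕ) : ℕ → α := fun j => v (i + j)

/-- A loop of length `m` (given by `m`-periodic sequences) is simple if it is not the
repetition of a shorter loop. -/
def SimpleLoop {α β : Type} (m : ℕ) (v : ℕ → α) (s : ℕ → β) : Prop :=
  ¬ ∃ d : ℕ, 0 < d ∧ d < m ∧ d ∣ m ∧ (∀ i, v (i + d) = v i) ∧ (∀ i, s (i + d) = s i)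

/-- The basic bands associated to a (spatially labelled) periodic orbit of strips
`B 0 < B 1 < … < B n`: `I_{B_k B_{k+1}} = E_{(B_k)⁺ (B_{k+1})⁻}`. -/
def basicBand {n : ℕ} (B : Fin (n + 1) → Set Cyl) (k : Fin n) : Set Cyl :=
  bandBetween (topCover (B k.castSucc)) (botCover (B k.succ))

/-- Signed arrow between bands in a signed Markov graph of `F`. -/
def BArrow (F : Cyl → Cyl) (s : Bool) (A B : Set Cyl) : Prop :=
  if s then FCoversPos F A B else FCoversNeg F A B

/-- A loop of length `m` in the signed Markov graph of `F` over the basic bands of the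
periodic orbit of strips `B`. -/
def IsBLoop (F : Cyl → Cyl) {n : ℕ} (B : Fin (n + 1) → Set Cyl) (m : ℕ)
    (v : ℕ → Fin n) (s : ℕ → Bool) : Prop :=
  0 < m ∧ (∀ i, v (i + m) = v i) ∧ (∀ i, s (i + m) = s i) ∧
    ∀ i, BArrow F (s i) (basicBand B (v i)) (basicBand B (v (i + 1)))

/-- Equality of patterns given as cyclic permutations of possibly different index sets. -/
def PatternEqNat {a b : ℕ} (τ : Equiv.Perm (Fin a)) (ν : Equiv.Perm (Fin b)) : Prop :=
  a = b ∧ ∀ (i : Fin a) (j : Fin b), (i : ℕ) = (j : ℕ) → ((τ i : ℕ) = (ν j : ℕ))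

/-- The entropy of a strips pattern: the infimum of the entropies of the maps in `S(Ω)`
exhibiting it. -/
def patternEntropy {n : ℕ} (τ : Equiv.Perm (Fin n)) : EReal :=
  sInf {e : EReal | ∃ F : Cyl → Cyl, IsQPF F ∧ ExhibitsStripPattern F τ ∧ e = hTop F}

end


section AssocLoopHelpers

lemma perm_pow_mod {N : ℕ} {α : Type*} (ν : Equiv.Perm α) (a : α) (hfix : (ν ^ N) a = a)
    (hN : 0 < N) (i : ℕ) : (ν ^ i) a = (ν ^ (i % N)) a := by
  induction i using Nat.strong_induction_on with
  | _ i ih =>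
    rcases lt_or_ge i N with h | h
    · rw [Nat.mod_eq_of_lt h]
    · have h3 : (ν^(i-N+N)) a = (ν^(i-N)) a := by
        rw [pow_add, Equiv.Perm.mul_apply, hfix]
      calc (ν^i) a = (ν^(i-N)) a := by
            conv_lhs => rw [← Nat.sub_add_cancel h]
            exact h3
        _ = (ν^((i-N) % N)) a := ih (i-N) (by omega)
        _ = (ν^(i % N)) a := by rw [← Nat.mod_eq_sub_mod h]

lemma cyclic_period_iff {m : ℕ} (ν : Equiv.Perm (Fin (m+1))) (hν : IsCyclicPerm ν)
    (a : Fin (m+1)) (i : ℕ) : (ν ^ i) a = a ↔ (m+1) ∣ i := by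
  have hbig : ∀ c : ℕ, 0 < c → (ν^c) a = a → m + 1 ≤ c := by
    intro c hc hca
    have hsurj : (Finset.univ : Finset (Fin (m+1))) ⊆
        Finset.image (fun i => (ν^i) a) (Finset.range c) := by
      intro j _
      obtain ⟨i, hi⟩ := hν a j
      rw [Finset.mem_image]
      exact ⟨i % c, Finset.mem_range.2 (Nat.mod_lt _ hc),
        by rw [← perm_pow_mod ν a hca hc i, hi]⟩
    calc m + 1 = (Finset.univ : Finset (Fin (m+1))).card := by simp
      _ ≤ (Finset.image (fun i => (ν^i) a) (Finset.range c)).card := Finset.card_le_card hsurj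
      _ ≤ (Finset.range c).card := Finset.card_image_le
      _ = c := Finset.card_range c
  have hex : (ν^(m+1)) a = a := by
    have hpig : ∃ x ∈ Finset.range (m+2), ∃ y ∈ Finset.range (m+2), x ≠ y ∧
        (ν^x) a = (ν^y) a := by
      apply Finset.exists_ne_map_eq_of_card_lt_of_maps_to
        (t := (Finset.univ : Finset (Fin (m+1))))
      · simp
      · intro x _; exact Finset.mem_univ _
    obtain ⟨x, hx2, y, hy2, hxy, hfe⟩ := hpig
    rw [Finset.mem_range] at hx2 hy2
    have key : ∀ x y : ℕ, x < y → y < m + 2 → (ν^x) a = (ν^y) a → (ν^(m+1)) a = a := by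
      intro x y hlt hy2 he
      have hper : (ν^(y-x)) a = a := by
        have h5 : (ν^y) a = (ν^x) ((ν^(y-x)) a) := by
          rw [← Equiv.Perm.mul_apply, ← pow_add]
          congr 2
          omega
        have h2 : (ν^x) a = (ν^x) ((ν^(y-x)) a) := by rw [he, h5]
        exact ((ν^x).injective h2).symm
      have h1 : 0 < y - x := by omega
      have h2 := hbig (y-x) h1 hper
      have h6 : y - x = m + 1 := by omega
      rwa [h6] at hper
    rcases lt_or_gt_of_ne hxy with h | h
    · exact key x y h hy2 hfe
    · exact key y x h hx2 hfe.symm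
  constructor
  · intro hi
    by_contra hnd
    have hr : (ν^(i % (m+1))) a = a := by
      rw [← perm_pow_mod ν a hex (by omega) i, hi]
    have h1 : 0 < i % (m+1) := by
      rcases Nat.eq_zero_or_pos (i % (m+1)) with h | h
      · exact absurd (Nat.dvd_of_mod_eq_zero h) hnd
      · exact h
    have := hbig _ h1 hr
    have := Nat.mod_lt i (show 0 < m + 1 by omega)
    omega
  · rintro ⟨t, rfl⟩
    induction t with
    | zero => simp
    | succ t ih =>
      have h7 : (m+1) * (t+1) = (m+1)*t + (m+1) := by ring
      rw [h7, pow_add, Equiv.Perm.mul_apply, hex, ih]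

lemma fin_locate {n : ℕ} (hn : 0 < n) (p : Fin (n+1) → ℝ) (hp : StrictMono p)
    (x : ℝ) (h0 : p 0 ≤ x) (h1 : x ≤ p (Fin.last n)) :
    ∃ a : Fin n, p a.castSucc ≤ x ∧ x ≤ p a.succ := by
  classical
  set A : Finset (Fin (n+1)) := Finset.univ.filter (fun b => p b ≤ x) with hA
  have h0A : (0 : Fin (n+1)) ∈ A := by simp [hA, h0]
  have hAne : A.Nonempty := ⟨0, h0A⟩
  set a' := A.max' hAne with ha'
  have ha'mem : p a' ≤ x := by
    have := A.max'_mem hAne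
    simp [hA] at this
    exact this
  rcases Nat.lt_or_ge a'.val n with hlt | hge
  · refine ⟨⟨a'.val, hlt⟩, ?_, ?_⟩
    · have : Fin.castSucc ⟨a'.val, hlt⟩ = a' := by ext; simp
      rw [this]; exact ha'mem
    · by_contra hcon
      push_neg at hcon
      have hmem : (Fin.succ ⟨a'.val, hlt⟩ : Fin (n+1)) ∈ A := by
        simp [hA]; exact le_of_lt hcon
      have := A.le_max' _ hmem
      rw [← ha'] at this
      have h2 : a'.val + 1 ≤ a'.val := this
      omega
  · have haa : a' = Fin.last n := by
      have := a'.isLt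
      ext; simp only [Fin.last]; omega
    have hx : x = p (Fin.last n) := le_antisymm h1 (by rw [← haa]; exact ha'mem)
    refine ⟨⟨n-1, by omega⟩, ?_, ?_⟩
    · calc p _ ≤ p (Fin.last n) := hp.monotone (Fin.le_last _)
        _ = x := hx.symm
    · have h8 : (Fin.succ ⟨n-1, by omega⟩ : Fin (n+1)) = Fin.last n := by
        ext; simp [Fin.last]; omega
      rw [h8]
      exact le_of_eq hx

lemma fin_locate_strict {n : ℕ} (hn : 0 < n) (p : Fin (n+1) → ℝ) (hp : StrictMono p)
    (x : ℝ) (h0 : p 0 ≤ x) (h1 : x ≤ p (Fin.last n)) (hx : ∀ b, x ≠ p b) :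
    ∃ a : Fin n, p a.castSucc < x ∧ x < p a.succ := by
  obtain ⟨a, ha1, ha2⟩ := fin_locate hn p hp x h0 h1
  exact ⟨a, lt_of_le_of_ne ha1 (Ne.symm (hx _)), lt_of_le_of_ne ha2 (hx _)⟩

lemma affine_between {L R fL fR x fx : ℝ} (hLR : L < R) (hx1 : L ≤ x) (hx2 : x ≤ R)
    (h : (R - L) * (fx - fL) = (x - L) * (fR - fL)) :
    min fL fR ≤ fx ∧ fx ≤ max fL fR := by
  rcases le_total fL fR with hc | hc
  · rw [min_eq_left hc, max_eq_right hc]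
    constructor <;> nlinarith
  · rw [min_eq_right hc, max_eq_left hc]
    constructor <;> nlinarith

lemma affine_lt {L R fL fR x fx : ℝ} (hLR : L < R)
    (h : (R - L) * (fx - fL) = (x - L) * (fR - fL)) :
    (fL < fR → ((L < x → fL < fx) ∧ (x < R → fx < fR))) ∧
    (fR < fL → ((L < x → fx < fL) ∧ (x < R → fR < fx))) := by
  constructor <;> intro hc <;> constructor <;> intro h2 <;> nlinarith

lemma affine_pair {L R fL fR x1 x2 fx1 fx2 : ℝ} (hLR : L < R)
    (h1 : (R - L) * (fx1 - fL) = (x1 - L) * (fR - fL))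
    (h2 : (R - L) * (fx2 - fL) = (x2 - L) * (fR - fL))
    (hx : x1 < x2) :
    (fL < fR → fx1 < fx2) ∧ (fR < fL → fx2 < fx1) := by
  constructor <;> intro hc <;> nlinarith

lemma affine_formula {L R fL fR x fx : ℝ} (hLR : L < R)
    (h : (R - L) * (fx - fL) = (x - L) * (fR - fL)) :
    fx = (fR - fL)/(R - L) * x + (fL - (fR - fL)/(R - L) * L) := by
  have hne : R - L ≠ 0 := by linarith
  field_simp
  linarith [h]



lemma monotone_two_to_one {m d : ℕ} (hmd : m = 2*d) (φ : Fin m → Fin d)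
    (hmono : Monotone φ)
    (hfib : ∀ w : Fin d, (Finset.univ.filter (fun x => φ x = w)).card ≤ 2) :
    ∀ x : Fin m, (φ x : ℕ) = (x : ℕ) / 2 := by
  intro x
  have hupper : (x : ℕ) + 1 ≤ 2 * ((φ x : ℕ) + 1) := by
    have hsub : Finset.Iic x ⊆ Finset.univ.filter (fun y => φ y ≤ φ x) := by
      intro y hy
      rw [Finset.mem_Iic] at hy
      rw [Finset.mem_filter]
      exact ⟨Finset.mem_univ _, hmono hy⟩
    have hcount : (Finset.univ.filter (fun y => φ y ≤ φ x)).card ≤ 2 * ((φ x : ℕ) + 1) := by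
      have h1 : (Finset.univ.filter (fun y => φ y ≤ φ x)).card ≤ 2 * (Finset.Iic (φ x)).card := by
        apply Finset.card_le_mul_card_image_of_maps_to
          (f := φ) (fun a ha => by
            rw [Finset.mem_filter] at ha
            exact Finset.mem_Iic.2 ha.2)
        intro b _
        calc ((Finset.univ.filter (fun y => φ y ≤ φ x)).filter (fun y => φ y = b)).card
            ≤ (Finset.univ.filter (fun y => φ y = b)).card := by
              apply Finset.card_le_card
              intro z hz
              rw [Finset.mem_filter] at hz ⊢
              exact ⟨Finset.mem_univ _, hz.2⟩
          _ ≤ 2 := hfib b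
      rwa [Fin.card_Iic] at h1
    have h2 := Finset.card_le_card hsub
    rw [Fin.card_Iic] at h2
    omega
  have hlower : m - (x : ℕ) ≤ 2 * (d - (φ x : ℕ)) := by
    have hsub : Finset.Ici x ⊆ Finset.univ.filter (fun y => φ x ≤ φ y) := by
      intro y hy
      rw [Finset.mem_Ici] at hy
      rw [Finset.mem_filter]
      exact ⟨Finset.mem_univ _, hmono hy⟩
    have hcount : (Finset.univ.filter (fun y => φ x ≤ φ y)).card ≤ 2 * (Finset.Ici (φ x)).card := by
      apply Finset.card_le_mul_card_image_of_maps_to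
        (f := φ) (fun a ha => by
          rw [Finset.mem_filter] at ha
          exact Finset.mem_Ici.2 ha.2)
      intro b _
      calc ((Finset.univ.filter (fun y => φ x ≤ φ y)).filter (fun y => φ y = b)).card
          ≤ (Finset.univ.filter (fun y => φ y = b)).card := by
            apply Finset.card_le_card
            intro z hz
            rw [Finset.mem_filter] at hz ⊢
            exact ⟨Finset.mem_univ _, hz.2⟩
        _ ≤ 2 := hfib b
    rw [Fin.card_Ici] at hcount
    have h2 := Finset.card_le_card hsub
    rw [Fin.card_Ici] at h2
    omega
  have hx := x.isLt
  have hφ := (φ x).isLt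
  omega

lemma IArrow_of_true {n : ℕ} {f : II → II} {p : Fin (n+1) → II} {c c' : Fin n}
    (h1 : (f (p c.castSucc) : ℝ) ≤ p c'.castSucc) (h2 : (p c'.succ : ℝ) ≤ f (p c.succ)) :
    IArrow f p true c c' := by
  simp [IArrow, h1, h2]

lemma IArrow_of_false {n : ℕ} {f : II → II} {p : Fin (n+1) → II} {c c' : Fin n}
    (h1 : (f (p c.succ) : ℝ) ≤ p c'.castSucc) (h2 : (p c'.succ : ℝ) ≤ f (p c.castSucc)) :
    IArrow f p false c c' := by
  simp [IArrow, h1, h2]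

lemma IArrow_true_elim {n : ℕ} {f : II → II} {p : Fin (n+1) → II} {c c' : Fin n}
    (h : IArrow f p true c c') :
    (f (p c.castSucc) : ℝ) ≤ p c'.castSucc ∧ (p c'.succ : ℝ) ≤ f (p c.succ) := by
  simpa [IArrow] using h

lemma IArrow_false_elim {n : ℕ} {f : II → II} {p : Fin (n+1) → II} {c c' : Fin n}
    (h : IArrow f p false c c') :
    (f (p c.succ) : ℝ) ≤ p c'.castSucc ∧ (p c'.succ : ℝ) ≤ f (p c.castSucc) := by
  simpa [IArrow] using h

end AssocLoopHelpers

set_option maxHeartbeats 4000000 in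
/-- existence, uniqueness and simplicity of the loop associated to a
periodic orbit of a `P`-linear map whose pattern differs from that of `P`. -/
theorem unique_simple_assoc_loop {n k : ℕ}
    (f : II → II) (p : Fin (n + 1) → II) (hp : StrictMono p)
    (τ : Equiv.Perm (Fin (n + 1))) (hτ : IsCyclicPerm τ)
    (hporb : ∀ i, f (p i) = p (τ i)) (hlin : IsPLinear f p)
    (q : Fin (k + 1) → II) (hq : StrictMono q)
    (ν : Equiv.Perm (Fin (k + 1))) (hν : IsCyclicPerm ν)
    (hqorb : ∀ i, f (q i) = q (ν i))
    (hne : ¬ PatternEqNat τ ν) :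
    ∃ (v : ℕ → Fin n) (s : ℕ → Bool),
      IsILoop f p (k + 1) v s ∧ IAssocPt f p (k + 1) (q 0) v ∧
      SimpleLoop (k + 1) v s ∧
      ∀ (v' : ℕ → Fin n) (s' : ℕ → Bool),
        IsILoop f p (k + 1) v' s' → IAssocPt f p (k + 1) (q 0) v' →
        ∀ i, v' i = v i ∧ s' i = s i := by
  classical
  -- coerced strict monotonicity
  have hpR : StrictMono (fun b : Fin (n+1) => (p b : ℝ)) := fun i j h => by
    exact_mod_cast hp h
  have hqR : StrictMono (fun b : Fin (k+1) => (q b : ℝ)) := fun i j h => by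
    exact_mod_cast hq h
  -- iterates on the orbits
  have hXq : ∀ (i : ℕ) (j : Fin (k+1)), f^[i] (q j) = q ((ν ^ i) j) := by
    intro i
    induction i with
    | zero => intro j; simp
    | succ i ih =>
      intro j
      rw [Function.iterate_succ_apply, hqorb j, ih (ν j), pow_succ, Equiv.Perm.mul_apply]
  have hPit : ∀ (i : ℕ) (a : Fin (n+1)), f^[i] (p a) = p ((τ ^ i) a) := by
    intro i
    induction i with
    | zero => intro a; simp
    | succ i ih =>
      intro a
      rw [Function.iterate_succ_apply, hporb a, ih (τ a), pow_succ, Equiv.Perm.mul_apply]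
  -- the two orbits are disjoint
  have hQP : ∀ (jj : Fin (k+1)) (a : Fin (n+1)), q jj ≠ p a := by
    intro jj a h
    have himg : ∀ x : Fin (k+1), ∃ b : Fin (n+1), q x = p b := by
      intro x
      obtain ⟨i, hi⟩ := hν jj x
      refine ⟨(τ^i) a, ?_⟩
      calc q x = q ((ν^i) jj) := by rw [hi]
        _ = f^[i] (q jj) := (hXq i jj).symm
        _ = f^[i] (p a) := by rw [h]
        _ = p ((τ^i) a) := hPit i a
    have hpim : ∀ b : Fin (n+1), ∃ x : Fin (k+1), p b = q x := by
      intro b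
      obtain ⟨i, hi⟩ := hτ a b
      refine ⟨(ν^i) jj, ?_⟩
      calc p b = p ((τ^i) a) := by rw [hi]
        _ = f^[i] (p a) := (hPit i a).symm
        _ = f^[i] (q jj) := by rw [h]
        _ = q ((ν^i) jj) := hXq i jj
    have hseq : Finset.image p Finset.univ = Finset.image q Finset.univ := by
      apply Finset.Subset.antisymm
      · intro y hy
        rw [Finset.mem_image] at hy ⊢
        obtain ⟨b, _, rfl⟩ := hy
        obtain ⟨x, hx⟩ := hpim b
        exact ⟨x, Finset.mem_univ _, hx.symm⟩
      · intro y hy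
        rw [Finset.mem_image] at hy ⊢
        obtain ⟨x, _, rfl⟩ := hy
        obtain ⟨b, hb⟩ := himg x
        exact ⟨b, Finset.mem_univ _, hb.symm⟩
    have hcardp : (Finset.image p Finset.univ).card = n + 1 := by
      rw [Finset.card_image_of_injective _ hp.injective, Finset.card_univ, Fintype.card_fin]
    have hcardq : (Finset.image q Finset.univ).card = k + 1 := by
      rw [Finset.card_image_of_injective _ hq.injective, Finset.card_univ, Fintype.card_fin]
    have hnk : n = k := by
      have := hseq ▸ hcardp
      omega
    subst hnk
    have hpq : p = q := by
      have e1 := Finset.orderEmbOfFin_unique (s := Finset.image p Finset.univ) hcardp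
        (f := p) (fun x => Finset.mem_image_of_mem _ (Finset.mem_univ x)) hp
      have e2 := Finset.orderEmbOfFin_unique (s := Finset.image p Finset.univ) hcardp
        (f := q) (fun x => by rw [hseq]; exact Finset.mem_image_of_mem _ (Finset.mem_univ x)) hq
      rw [e1, e2]
    apply hne
    refine ⟨rfl, ?_⟩
    intro i j hij
    have hij' : i = j := Fin.ext hij
    subst hij'
    have : p (τ i) = p (ν i) := by
      rw [← hporb i, hpq, hqorb i]
    rw [hp.injective this]
  -- n is positive
  have hn : 0 < n := by
    rcases Nat.eq_zero_or_pos n with h0 | h0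
    · exfalso
      subst h0
      have hconst : f (q 0) = f (p 0) := by
        rcases le_total (q 0) (p 0) with h | h
        · rw [hlin.2.2.1 _ h]
        · rw [hlin.2.2.2 _ h]
          exact congrArg f (congrArg p Fin.last_zero)
      have : q (ν 0) = p (τ 0) := by rw [← hqorb, ← hporb, hconst]
      exact hQP _ _ this
    · exact h0
  -- range bound for f
  have hPbound : ∀ b : Fin (n+1), (p 0 : ℝ) ≤ p b ∧ (p b : ℝ) ≤ p (Fin.last n) := by
    intro b
    constructor
    · exact hpR.monotone (Fin.zero_le b)
    · exact hpR.monotone (Fin.le_last b)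
  have hrange : ∀ x : II, (p 0 : ℝ) ≤ f x ∧ (f x : ℝ) ≤ p (Fin.last n) := by
    intro x
    rcases le_total x (p 0) with h | h
    · rw [hlin.2.2.1 x h, hporb 0]
      exact hPbound (τ 0)
    rcases le_total (p (Fin.last n)) x with h' | h'
    · rw [hlin.2.2.2 x h', hporb _]
      exact hPbound _
    · obtain ⟨a, ha1, ha2⟩ := fin_locate hn (fun b => (p b : ℝ)) hpR (x : ℝ)
        (by exact_mod_cast h) (by exact_mod_cast h')
      have hLR : (p a.castSucc : ℝ) < p a.succ := hpR (Fin.castSucc_lt_succ (i := a))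
      have haf := hlin.2.1 a x (by exact_mod_cast ha1) (by exact_mod_cast ha2)
      have hbet := affine_between hLR ha1 ha2 haf
      have hL := hPbound (τ a.castSucc)
      have hR := hPbound (τ a.succ)
      rw [← hporb] at hL hR
      constructor
      · calc (p 0 : ℝ) ≤ min (f (p a.castSucc) : ℝ) (f (p a.succ) : ℝ) :=
              le_min hL.1 hR.1
          _ ≤ (f x : ℝ) := hbet.1
      · calc (f x : ℝ) ≤ max (f (p a.castSucc) : ℝ) (f (p a.succ) : ℝ) := hbet.2
          _ ≤ (p (Fin.last n) : ℝ) := max_le hL.2 hR.2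
  -- orbit points are strictly inside
  have hQin : ∀ jj : Fin (k+1), (p 0 : ℝ) < q jj ∧ (q jj : ℝ) < p (Fin.last n) := by
    intro jj
    have himg : q jj = f (q (ν⁻¹ jj)) := by
      rw [hqorb (ν⁻¹ jj), ← Equiv.Perm.mul_apply, mul_inv_cancel, Equiv.Perm.one_apply]
    have h1 := hrange (q (ν⁻¹ jj))
    rw [← himg] at h1
    constructor
    · exact lt_of_le_of_ne h1.1 (fun h => hQP jj 0 (Subtype.ext h.symm))
    · exact lt_of_le_of_ne h1.2 (fun h => hQP jj (Fin.last n) (Subtype.ext h))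
  -- locate the orbit points
  have hloc : ∀ i : ℕ, ∃ a : Fin n,
      (p a.castSucc : ℝ) < (f^[i] (q 0) : ℝ) ∧ ((f^[i] (q 0) : II) : ℝ) < p a.succ := by
    intro i
    rw [hXq i 0]
    exact fin_locate_strict hn (fun b => (p b : ℝ)) hpR _
      (le_of_lt (hQin _).1) (le_of_lt (hQin _).2)
      (fun b h => hQP _ b (Subtype.ext h))
  choose v hv using hloc
  set s : ℕ → Bool := fun i => decide ((f (p (v i).castSucc) : ℝ) < (f (p (v i).succ) : ℝ))
    with hs
  -- uniqueness of the location
  have vuniq : ∀ (i : ℕ) (a : Fin n), ((p a.castSucc : ℝ) ≤ f^[i] (q 0)) →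
      ((f^[i] (q 0) : ℝ) ≤ p a.succ) → a = v i := by
    intro i a h1 h2
    by_contra hne'
    rcases Ne.lt_or_gt hne' with hlt | hlt
    · have hle : a.succ ≤ (v i).castSucc := by
        rw [Fin.le_def]
        rw [Fin.lt_def] at hlt
        simp only [Fin.val_succ, Fin.coe_castSucc]
        omega
      have := hpR.monotone hle
      have h3 := (hv i).1
      linarith
    · have hle : (v i).succ ≤ a.castSucc := by
        rw [Fin.le_def]
        rw [Fin.lt_def] at hlt
        simp only [Fin.val_succ, Fin.coe_castSucc]
        omega
      have := hpR.monotone hle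
      have h3 := (hv i).2
      linarith
  -- periodicity facts
  have hνfix : (ν ^ (k+1)) (0 : Fin (k+1)) = 0 := (cyclic_period_iff ν hν 0 (k+1)).2 dvd_rfl
  have hQper : f^[k+1] (q 0) = q 0 := by rw [hXq, hνfix]
  have hQex : ∀ i : ℕ, 0 < i → i < k+1 → f^[i] (q 0) ≠ q 0 := by
    intro i h1 h2 hcon
    rw [hXq] at hcon
    have h3 := hq.injective hcon
    have h4 := (cyclic_period_iff ν hν 0 i).1 h3
    have := Nat.le_of_dvd h1 h4
    omega
  have hit : ∀ i : ℕ, f^[i + (k+1)] (q 0) = f^[i] (q 0) := by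
    intro i
    rw [Function.iterate_add_apply, hQper]
  have hvper : ∀ i : ℕ, v (i + (k+1)) = v i := by
    intro i
    apply vuniq
    · rw [← hit i]; exact le_of_lt (hv (i + (k+1))).1
    · rw [← hit i]; exact le_of_lt (hv (i + (k+1))).2
  have hsper : ∀ i : ℕ, s (i + (k+1)) = s i := by
    intro i
    simp only [hs, hvper i]
  -- comparison helpers against the grid
  have hPleft : ∀ (b : Fin (n+1)) (c : Fin n) (y : ℝ),
      (p b : ℝ) < y → y < p c.succ → (p b : ℝ) ≤ p c.castSucc := by
    intro b c y h1 h2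
    have hbc : b ≤ c.castSucc := by
      rw [Fin.le_def]
      by_contra hh
      have hcb : c.succ ≤ b := by
        rw [Fin.le_def]
        simp only [Fin.val_succ, Fin.coe_castSucc] at hh ⊢
        omega
      have := hpR.monotone hcb
      linarith
    exact hpR.monotone hbc
  have hPright : ∀ (b : Fin (n+1)) (c : Fin n) (y : ℝ),
      (p c.castSucc : ℝ) < y → y < p b → (p c.succ : ℝ) ≤ p b := by
    intro b c y h1 h2
    have hbc : c.succ ≤ b := by
      rw [Fin.le_def]
      by_contra hh
      have hcb : b ≤ c.castSucc := by
        rw [Fin.le_def]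
        simp only [Fin.val_succ, Fin.coe_castSucc] at hh ⊢
        omega
      have := hpR.monotone hcb
      linarith
    exact hpR.monotone hbc
  -- basic data about each basic interval in the itinerary
  have hLR : ∀ i : ℕ, (p (v i).castSucc : ℝ) < p (v i).succ :=
    fun i => hpR (Fin.castSucc_lt_succ (i := v i))
  have hfne : ∀ i : ℕ, (f (p (v i).castSucc) : ℝ) ≠ (f (p (v i).succ) : ℝ) := by
    intro i hcon
    have h1 : p (τ (v i).castSucc) = p (τ (v i).succ) := by
      rw [← hporb, ← hporb]
      exact Subtype.ext hcon
    have h2 := τ.injective (hp.injective h1)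
    have h3 : ((v i).castSucc : Fin (n+1)).val = ((v i).succ : Fin (n+1)).val := by rw [h2]
    simp only [Fin.coe_castSucc, Fin.val_succ] at h3
    omega
  have hsiff : ∀ i : ℕ, (s i = true) ↔ ((f (p (v i).castSucc) : ℝ) < (f (p (v i).succ) : ℝ)) := by
    intro i
    simp [hs]
  -- the next orbit point
  have hnext : ∀ i : ℕ, f^[i+1] (q 0) = f (f^[i] (q 0)) := by
    intro i
    rw [Function.iterate_succ_apply']
  have haffQ : ∀ i : ℕ,
      ((p (v i).succ : ℝ) - p (v i).castSucc) * ((f (f^[i] (q 0)) : ℝ) - f (p (v i).castSucc))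
      = ((f^[i] (q 0) : ℝ) - p (v i).castSucc) *
        ((f (p (v i).succ) : ℝ) - f (p (v i).castSucc)) := by
    intro i
    exact hlin.2.1 (v i) (f^[i] (q 0))
      (by exact_mod_cast le_of_lt (hv i).1) (by exact_mod_cast le_of_lt (hv i).2)
  -- the arrows hold
  have harrow : ∀ i : ℕ, IArrow f p (s i) (v i) (v (i+1)) := by
    intro i
    have hq1 := (hv (i+1)).1
    have hq2 := (hv (i+1)).2
    rw [hnext i] at hq1 hq2
    have hal := affine_lt (hLR i) (haffQ i)
    rcases hsb : s i with _ | _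
    · -- s i = false : f decreasing on the interval
      have hflt : (f (p (v i).succ) : ℝ) < (f (p (v i).castSucc) : ℝ) := by
        rcases lt_or_ge ((f (p (v i).succ)) : ℝ) ((f (p (v i).castSucc)) : ℝ) with h | h
        · exact h
        · exfalso
          have h2 : (f (p (v i).castSucc) : ℝ) < f (p (v i).succ) :=
            lt_of_le_of_ne h (hfne i)
          rw [← hsiff i] at h2
          rw [hsb] at h2
          exact Bool.false_ne_true h2
      have h5 := (hal.2 hflt).1 (hv i).1
      have h6 := (hal.2 hflt).2 (hv i).2
      rw [hporb ((v i).castSucc)] at h5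
      rw [hporb ((v i).succ)] at h6
      apply IArrow_of_false
      · rw [hporb ((v i).succ)]
        exact hPleft _ _ _ h6 hq2
      · rw [hporb ((v i).castSucc)]
        exact hPright _ _ _ hq1 h5
    · -- s i = true : f increasing
      have hflt : (f (p (v i).castSucc) : ℝ) < (f (p (v i).succ) : ℝ) := by
        rw [← hsiff i]; exact hsb
      have h5 := (hal.1 hflt).1 (hv i).1
      have h6 := (hal.1 hflt).2 (hv i).2
      rw [hporb ((v i).castSucc)] at h5
      rw [hporb ((v i).succ)] at h6
      apply IArrow_of_true
      · rw [hporb ((v i).castSucc)]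
        exact hPleft _ _ _ h5 hq2
      · rw [hporb ((v i).succ)]
        exact hPright _ _ _ hq1 h6
  refine ⟨v, s, ⟨by omega, hvper, hsper, harrow⟩, ⟨hQper, hQex, ?_⟩, ?_, ?_⟩
  · -- location of the orbit
    intro i
    constructor
    · exact_mod_cast le_of_lt (hv i).1
    · exact_mod_cast le_of_lt (hv i).2
  · -- simplicity
    rintro ⟨d, hd0, hdlt, hdvd, hvd, hsd⟩
    -- index rewriting helper
    have idx : ∀ (a b : ℕ), a = b → f^[a] (q 0) = f^[b] (q 0) := fun a b h => by rw [h]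
    have hvadd : ∀ (i t : ℕ), v (i + d * t) = v i := by
      intro i t
      induction t with
      | zero => simp
      | succ t ih =>
        have h1 : i + d * (t+1) = (i + d * t) + d := by ring
        rw [h1, hvd, ih]
    -- s i = false means f is decreasing on the i-th interval
    have hsflt : ∀ i : ℕ, s i = false → (f (p (v i).succ) : ℝ) < (f (p (v i).castSucc) : ℝ) := by
      intro i hsb
      rcases lt_or_ge ((f (p (v i).succ)) : ℝ) ((f (p (v i).castSucc)) : ℝ) with h | h
      · exact h
      · exfalso
        have h2 : (f (p (v i).castSucc) : ℝ) < f (p (v i).succ) :=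
          lt_of_le_of_ne h (hfne i)
        rw [← hsiff i] at h2
        rw [hsb] at h2
        exact Bool.false_ne_true h2
    -- single step order transport
    have stepj : ∀ (j a b : ℕ), d ∣ a → d ∣ b →
        ((f^[j+a] (q 0) : ℝ) < f^[j+b] (q 0)) →
        ((s j = true → (f^[(j+1)+a] (q 0) : ℝ) < f^[(j+1)+b] (q 0)) ∧
         (s j = false → (f^[(j+1)+b] (q 0) : ℝ) < f^[(j+1)+a] (q 0))) := by
      intro j a b ha hb hlt
      obtain ⟨ta, rfl⟩ := ha
      obtain ⟨tb, rfl⟩ := hb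
      have ea : v (j + d * ta) = v j := hvadd j ta
      have eb : v (j + d * tb) = v j := hvadd j tb
      have ba1 := (hv (j + d * ta)).1
      have ba2 := (hv (j + d * ta)).2
      have bb1 := (hv (j + d * tb)).1
      have bb2 := (hv (j + d * tb)).2
      rw [ea] at ba1 ba2
      rw [eb] at bb1 bb2
      have eqa := hlin.2.1 (v j) (f^[j + d * ta] (q 0))
        (by exact_mod_cast le_of_lt ba1) (by exact_mod_cast le_of_lt ba2)
      have eqb := hlin.2.1 (v j) (f^[j + d * tb] (q 0))
        (by exact_mod_cast le_of_lt bb1) (by exact_mod_cast le_of_lt bb2)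
      have hpair := affine_pair (hLR j) eqa eqb hlt
      have hia : (j+1) + d * ta = (j + d * ta) + 1 := by ring
      have hib : (j+1) + d * tb = (j + d * tb) + 1 := by ring
      constructor
      · intro hsb
        rw [idx _ _ hia, idx _ _ hib, hnext, hnext]
        exact hpair.1 ((hsiff j).1 hsb)
      · intro hsb
        rw [idx _ _ hia, idx _ _ hib, hnext, hnext]
        exact hpair.2 (hsflt j hsb)
    -- transported order over j steps
    have key : ∀ j : ℕ,
        (∀ a b : ℕ, d ∣ a → d ∣ b → ((f^[a] (q 0) : ℝ) < f^[b] (q 0)) →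
          (f^[j+a] (q 0) : ℝ) < f^[j+b] (q 0)) ∨
        (∀ a b : ℕ, d ∣ a → d ∣ b → ((f^[a] (q 0) : ℝ) < f^[b] (q 0)) →
          (f^[j+b] (q 0) : ℝ) < f^[j+a] (q 0)) := by
      intro j
      induction j with
      | zero => left; intro a b _ _ h; simpa using h
      | succ j ih =>
        rcases ih with ih | ih <;> cases hsj : s j
        · right
          intro a b ha hb h
          exact (stepj j a b ha hb (ih a b ha hb h)).2 hsj
        · left
          intro a b ha hb h
          exact (stepj j a b ha hb (ih a b ha hb h)).1 hsj
        · left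
          intro a b ha hb h
          exact (stepj j b a hb ha (ih a b ha hb h)).2 hsj
        · right
          intro a b ha hb h
          exact (stepj j b a hb ha (ih a b ha hb h)).1 hsj
    -- a periodic strictly monotone chain is impossible
    have hqper_mul : ∀ t : ℕ, f^[t * (k+1)] (q 0) = q 0 := by
      intro t
      induction t with
      | zero => simp
      | succ t ih =>
        have h1 : (t+1) * (k+1) = t * (k+1) + (k+1) := by ring
        rw [idx _ _ h1, Function.iterate_add_apply, hQper, ih]
    have chaincontra : ∀ e : ℕ, 0 < e → d ∣ e → f^[e] (q 0) ≠ q 0 →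
        (∀ a b : ℕ, d ∣ a → d ∣ b → ((f^[a] (q 0) : ℝ) < f^[b] (q 0)) →
          (f^[e+a] (q 0) : ℝ) < f^[e+b] (q 0)) → False := by
      intro e he hde hne0 hmon
      have hper : f^[(k+1) * e] (q 0) = q 0 := by
        rw [idx _ _ (by ring : (k+1) * e = e * (k+1))]
        exact hqper_mul e
      have hne0R : ((f^[e] (q 0)) : ℝ) ≠ ((q 0 : II) : ℝ) := fun h => hne0 (Subtype.ext h)
      have hg0 : f^[0 * e] (q 0) = q 0 := by rw [idx _ _ (by ring : 0 * e = 0)]; simp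
      rcases lt_or_gt_of_ne hne0R with hlt | hlt
      · -- decreasing chain
        have hch : ∀ j : ℕ, (f^[(j+1) * e] (q 0) : ℝ) < f^[j * e] (q 0) := by
          intro j
          induction j with
          | zero =>
            rw [idx _ _ (by ring : 1 * e = e), hg0]
            exact hlt
          | succ j ih =>
            have h2 := hmon ((j+1)*e) (j*e) (Dvd.dvd.mul_left hde _) (Dvd.dvd.mul_left hde _) ih
            rw [idx _ _ (by ring : e + (j+1)*e = (j+2)*e), idx _ _ (by ring : e + j*e = (j+1)*e)]
              at h2
            exact h2
        have hanti : StrictAnti (fun j : ℕ => ((f^[j * e] (q 0) : II) : ℝ)) :=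
          strictAnti_nat_of_succ_lt hch
        have := hanti (show 0 < k+1 by omega)
        simp only [hg0, hper] at this
        exact lt_irrefl _ this
      · -- increasing chain
        have hch : ∀ j : ℕ, (f^[j * e] (q 0) : ℝ) < f^[(j+1) * e] (q 0) := by
          intro j
          induction j with
          | zero =>
            rw [idx _ _ (by ring : 1 * e = e), hg0]
            exact hlt
          | succ j ih =>
            have h2 := hmon (j*e) ((j+1)*e) (Dvd.dvd.mul_left hde _) (Dvd.dvd.mul_left hde _) ih
            rw [idx _ _ (by ring : e + (j+1)*e = (j+2)*e), idx _ _ (by ring : e + j*e = (j+1)*e)]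
              at h2
            exact h2
        have hmono : StrictMono (fun j : ℕ => ((f^[j * e] (q 0) : II) : ℝ)) :=
          strictMono_nat_of_lt_succ hch
        have := hmono (show 0 < k+1 by omega)
        simp only [hg0, hper] at this
        exact lt_irrefl _ this
    rcases key d with hmono | hanti
    · exact chaincontra d hd0 dvd_rfl (hQex d hd0 hdlt) hmono
    -- reversing case: the square is monotone
    have hmono2 : ∀ a b : ℕ, d ∣ a → d ∣ b → ((f^[a] (q 0) : ℝ) < f^[b] (q 0)) →
        (f^[2*d+a] (q 0) : ℝ) < f^[2*d+b] (q 0) := by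
      intro a b ha hb h
      have h1 := hanti a b ha hb h
      have h2 := hanti (d + b) (d + a) (dvd_add dvd_rfl hb) (dvd_add dvd_rfl ha) h1
      rw [idx _ _ (by ring : d + (d + a) = 2*d + a), idx _ _ (by ring : d + (d + b) = 2*d + b)] at h2
      exact h2
    rcases Nat.lt_or_ge (2*d) (k+1) with h2d | h2d
    · exact chaincontra (2*d) (by omega) ⟨2, by ring⟩ (hQex (2*d) (by omega) h2d) hmono2
    have hm2d : k + 1 = 2 * d := by
      obtain ⟨r, hr⟩ := hdvd
      have h4 : r ≥ 2 := by
        rcases Nat.lt_or_ge r 2 with h | h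
        · interval_cases r <;> omega
        · exact h
      have h3 : d * 2 ≤ d * r := Nat.mul_le_mul_left d h4
      omega
    -- THE RIGIDITY CASE : k + 1 = 2d and f^[d] reverses orientation
    -- the interval endpoints of the itinerary, slopes and intercepts
    set Aw : Fin n → ℝ :=
      fun w => ((f (p w.succ) : ℝ) - (f (p w.castSucc) : ℝ)) /
        ((p w.succ : ℝ) - (p w.castSucc : ℝ)) with hAwdef
    set Bw : Fin n → ℝ :=
      fun w => (f (p w.castSucc) : ℝ) - Aw w * (p w.castSucc : ℝ) with hBwdef
    have hlrw : ∀ w : Fin n, (p w.castSucc : ℝ) < p w.succ :=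
      fun w => hpR (Fin.castSucc_lt_succ (i := w))
    have hfstepw : ∀ (w : Fin n) (x : II), (p w.castSucc : ℝ) ≤ (x : ℝ) →
        (x : ℝ) ≤ (p w.succ : ℝ) → (f x : ℝ) = Aw w * x + Bw w := by
      intro w x h1 h2
      have heq := hlin.2.1 w x (by exact_mod_cast h1) (by exact_mod_cast h2)
      have h3 := affine_formula (hlrw w) heq
      rw [hAwdef, hBwdef]
      simp only []
      linarith [h3]
    have hAwne : ∀ w : Fin n, Aw w ≠ 0 := by
      intro w
      rw [hAwdef]
      simp only []
      apply div_ne_zero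
      · intro hcon
        -- the numerator vanishes iff f takes equal values on the endpoints
        have : (f (p w.castSucc) : ℝ) = (f (p w.succ) : ℝ) := by linarith
        have h1 : p (τ w.castSucc) = p (τ w.succ) := by
          rw [← hporb, ← hporb]; exact Subtype.ext this
        have h2 := τ.injective (hp.injective h1)
        have h3 : (w.castSucc : Fin (n+1)).val = (w.succ : Fin (n+1)).val := by rw [h2]
        simp only [Fin.coe_castSucc, Fin.val_succ] at h3
        omega
      · have := hlrw w; intro hcon; linarith
    have hAvpos : ∀ i : ℕ, s i = true → 0 < Aw (v i) := by
      intro i hsb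
      rw [hAwdef]
      simp only []
      apply div_pos
      · have := (hsiff i).1 hsb; linarith
      · have := hlrw (v i); linarith
    have hAvneg : ∀ i : ℕ, s i = false → Aw (v i) < 0 := by
      intro i hsb
      rw [hAwdef]
      simp only []
      apply div_neg_of_neg_of_pos
      · have := hsflt i hsb; linarith
      · have := hlrw (v i); linarith
    -- bounds for orbit points shifted by multiples of d
    have hbnd : ∀ (j c : ℕ), d ∣ c →
        (p (v j).castSucc : ℝ) < f^[j + c] (q 0) ∧ (f^[j + c] (q 0) : ℝ) < p (v j).succ := by
      intro j c hc
      obtain ⟨t, rfl⟩ := hc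
      constructor
      · have := (hv (j + d * t)).1; rwa [hvadd j t] at this
      · have := (hv (j + d * t)).2; rwa [hvadd j t] at this
    -- pick the two swapped points u0 < u1
    have hdd : f^[d + d] (q 0) = q 0 := by
      rw [idx _ _ (by omega : d + d = k+1)]; exact hQper
    have hdne : ((f^[d] (q 0)) : ℝ) ≠ ((f^[0] (q 0)) : ℝ) := by
      intro h
      exact hQex d hd0 hdlt (by simpa using Subtype.ext h)
    obtain ⟨a0, a1, ha0, ha1, hswap0, hswap1, hu01⟩ :
        ∃ a0 a1 : ℕ, d ∣ a0 ∧ d ∣ a1 ∧ f^[d + a0] (q 0) = f^[a1] (q 0) ∧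
          f^[d + a1] (q 0) = f^[a0] (q 0) ∧ ((f^[a0] (q 0) : ℝ) < f^[a1] (q 0)) := by
      rcases lt_or_gt_of_ne hdne with h | h
      · refine ⟨d, 0, dvd_rfl, dvd_zero d, hdd, by simp, by simpa using h⟩
      · refine ⟨0, d, dvd_zero d, dvd_rfl, by simp, hdd, by simpa using h⟩
    -- the difference of the two orbits evolves linearly
    have hD : ∀ j : ℕ, (f^[j + a1] (q 0) : ℝ) - (f^[j + a0] (q 0) : ℝ) =
        (∏ i ∈ Finset.range j, Aw (v i)) * ((f^[a1] (q 0) : ℝ) - (f^[a0] (q 0) : ℝ)) := by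
      intro j
      induction j with
      | zero => simp
      | succ j ih =>
        have e0 : f^[(j+1) + a0] (q 0) = f (f^[j + a0] (q 0)) := by
          rw [idx _ _ (by omega : (j+1) + a0 = (j + a0) + 1), hnext]
        have e1 : f^[(j+1) + a1] (q 0) = f (f^[j + a1] (q 0)) := by
          rw [idx _ _ (by omega : (j+1) + a1 = (j + a1) + 1), hnext]
        have b0 := hbnd j a0 ha0
        have b1 := hbnd j a1 ha1
        have f0 := hfstepw (v j) (f^[j + a0] (q 0)) (le_of_lt b0.1) (le_of_lt b0.2)
        have f1 := hfstepw (v j) (f^[j + a1] (q 0)) (le_of_lt b1.1) (le_of_lt b1.2)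
        rw [e0, e1, f0, f1, Finset.prod_range_succ]
        linear_combination Aw (v j) * ih
    -- the product of the slopes over one period is -1
    have hLam : (∏ i ∈ Finset.range d, Aw (v i)) = -1 := by
      have h1 := hD d
      rw [hswap0, hswap1] at h1
      have h2 : ((f^[a1] (q 0) : ℝ) - (f^[a0] (q 0) : ℝ)) ≠ 0 := by
        intro hcon; linarith
      have h3 : (∏ i ∈ Finset.range d, Aw (v i)) * ((f^[a1] (q 0) : ℝ) - (f^[a0] (q 0) : ℝ))
          = (-1) * ((f^[a1] (q 0) : ℝ) - (f^[a0] (q 0) : ℝ)) := by linarith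
      exact mul_right_cancel₀ h2 h3
    -- lengths of the loop intervals
    have hlen : ∀ i : ℕ, ((p (v (i+1)).succ : ℝ) - p (v (i+1)).castSucc) ≤
        |Aw (v i)| * ((p (v i).succ : ℝ) - p (v i).castSucc) := by
      intro i
      have harr := harrow i
      have habs : |Aw (v i)| * ((p (v i).succ : ℝ) - p (v i).castSucc)
          = |(f (p (v i).succ) : ℝ) - (f (p (v i).castSucc) : ℝ)| := by
        rw [hAwdef]
        simp only []
        rw [abs_div, abs_of_pos (by have := hlrw (v i); linarith :
          (0:ℝ) < (p (v i).succ : ℝ) - p (v i).castSucc)]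
        rw [div_mul_cancel₀]
        have := hlrw (v i); intro hcon; linarith
      rw [habs]
      cases hsb : s i
      · rw [hsb] at harr
        have h1 := IArrow_false_elim harr
        rw [abs_of_neg (by have := hsflt i hsb; linarith :
          ((f (p (v i).succ) : ℝ) - (f (p (v i).castSucc) : ℝ)) < 0)]
        linarith [h1.1, h1.2]
      · rw [hsb] at harr
        have h1 := IArrow_true_elim harr
        rw [abs_of_pos (by have := (hsiff i).1 hsb; linarith :
          (0:ℝ) < ((f (p (v i).succ) : ℝ) - (f (p (v i).castSucc) : ℝ)))]
        linarith [h1.1, h1.2]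
    -- and equality must hold everywhere in the product
    have hvmod : ∀ i : ℕ, v i = v (i % d) := by
      intro i
      induction i using Nat.strong_induction_on with
      | _ i ih =>
        rcases lt_or_ge i d with h | h
        · rw [Nat.mod_eq_of_lt h]
        · calc v i = v ((i - d) + d) := by rw [Nat.sub_add_cancel h]
            _ = v (i - d) := hvd _
            _ = v ((i - d) % d) := ih _ (by omega)
            _ = v (i % d) := by rw [← Nat.mod_eq_sub_mod h]
    have hlexact : ∀ i : ℕ, |Aw (v i)| * ((p (v i).succ : ℝ) - p (v i).castSucc)
        = ((p (v (i+1)).succ : ℝ) - p (v (i+1)).castSucc) := by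
      have hlt : ∀ i ∈ Finset.range d,
          ((p (v (i+1)).succ : ℝ) - p (v (i+1)).castSucc) ≤
            |Aw (v i)| * ((p (v i).succ : ℝ) - p (v i).castSucc) := fun i _ => hlen i
      -- telescoping products
      have hpos : ∀ w : Fin n, (0:ℝ) < (p w.succ : ℝ) - p w.castSucc := by
        intro w; have := hlrw w; linarith
      have htel : ∀ J : ℕ, (∏ i ∈ Finset.range J,
          (((p (v (i+1)).succ : ℝ) - p (v (i+1)).castSucc) /
            ((p (v i).succ : ℝ) - p (v i).castSucc)))
          = ((p (v J).succ : ℝ) - p (v J).castSucc) /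
            ((p (v 0).succ : ℝ) - p (v 0).castSucc) := by
        intro J
        induction J with
        | zero =>
          simp only [Finset.range_zero, Finset.prod_empty]
          exact (div_self (ne_of_gt (hpos (v 0)))).symm
        | succ J ih =>
          rw [Finset.prod_range_succ, ih]
          rw [div_mul_div_comm]
          rw [mul_comm ((p (v J).succ : ℝ) - p (v J).castSucc)]
          rw [mul_div_mul_right _ _ (ne_of_gt (hpos (v J)))]
      have hvd0 : v d = v 0 := by have := hvd 0; simpa using this
      have hprodc : (∏ i ∈ Finset.range d,
          (((p (v (i+1)).succ : ℝ) - p (v (i+1)).castSucc) /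
            ((p (v i).succ : ℝ) - p (v i).castSucc))) = 1 := by
        rw [htel d, hvd0, div_self (ne_of_gt (hpos (v 0)))]
      have hprodA : (∏ i ∈ Finset.range d, |Aw (v i)|) = 1 := by
        rw [← Finset.abs_prod, hLam]
        simp
      -- pointwise equality on range d
      have hptwise : ∀ i ∈ Finset.range d,
          |Aw (v i)| = (((p (v (i+1)).succ : ℝ) - p (v (i+1)).castSucc) /
            ((p (v i).succ : ℝ) - p (v i).castSucc)) := by
        by_contra hcon
        push_neg at hcon
        obtain ⟨i0, hi0, hne0⟩ := hcon
        have hle0 : (((p (v (i0+1)).succ : ℝ) - p (v (i0+1)).castSucc) /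
            ((p (v i0).succ : ℝ) - p (v i0).castSucc)) ≤ |Aw (v i0)| :=
          (div_le_iff₀ (hpos (v i0))).2 (hlen i0)
        have hlt0 := lt_of_le_of_ne hle0 (Ne.symm hne0)
        have hstrict : (∏ i ∈ Finset.range d,
            (((p (v (i+1)).succ : ℝ) - p (v (i+1)).castSucc) /
              ((p (v i).succ : ℝ) - p (v i).castSucc))) <
            (∏ i ∈ Finset.range d, |Aw (v i)|) := by
          apply Finset.prod_lt_prod
          · intro i _
            exact div_pos (hpos (v (i+1))) (hpos (v i))
          · intro i _
            rw [div_le_iff₀ (hpos (v i))]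
            exact hlen i
          · exact ⟨i0, hi0, hlt0⟩
        rw [hprodc, hprodA] at hstrict
        exact lt_irrefl _ hstrict
      -- transport to all i by periodicity
      intro i
      have hmodlt : i % d < d := Nat.mod_lt i hd0
      have h1 := hptwise (i % d) (Finset.mem_range.2 hmodlt)
      have hv1 : v (i % d) = v i := (hvmod i).symm
      have hv2 : v ((i % d) + 1) = v (i + 1) := by
        rw [hvmod ((i % d) + 1), hvmod (i+1)]
        congr 1
        exact (Nat.mod_modEq i d).add_right 1
      rw [hv1, hv2] at h1
      rw [h1, div_mul_cancel₀]
      have := hlrw (v i); intro hcon; linarith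
    -- exact endpoint matching (Markov exactness)
    have hAlen : ∀ i : ℕ, Aw (v i) * ((p (v i).succ : ℝ) - p (v i).castSucc)
        = (f (p (v i).succ) : ℝ) - (f (p (v i).castSucc) : ℝ) := by
      intro i
      rw [hAwdef]
      simp only []
      rw [div_mul_cancel₀]
      have := hlrw (v i); intro hcon; linarith
    have hmatch : ∀ i : ℕ,
        (s i = true → (f (p (v i).castSucc) : ℝ) = p (v (i+1)).castSucc ∧
          (f (p (v i).succ) : ℝ) = p (v (i+1)).succ) ∧
        (s i = false → (f (p (v i).castSucc) : ℝ) = p (v (i+1)).succ ∧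
          (f (p (v i).succ) : ℝ) = p (v (i+1)).castSucc) := by
      intro i
      have hle := hlexact i
      have hal := hAlen i
      constructor
      · intro hsb
        have harr := harrow i; rw [hsb] at harr
        have h1 := IArrow_true_elim harr
        rw [abs_of_pos (hAvpos i hsb)] at hle
        constructor
        · linarith [h1.1, h1.2]
        · linarith [h1.1, h1.2]
      · intro hsb
        have harr := harrow i; rw [hsb] at harr
        have h1 := IArrow_false_elim harr
        rw [abs_of_neg (hAvneg i hsb)] at hle
        constructor
        · linarith [h1.1, h1.2]
        · linarith [h1.1, h1.2]
    -- the permutation moves endpoints to endpoints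
    have hτm : ∀ i : ℕ,
        (s i = true → τ (v i).castSucc = (v (i+1)).castSucc ∧ τ (v i).succ = (v (i+1)).succ) ∧
        (s i = false → τ (v i).castSucc = (v (i+1)).succ ∧ τ (v i).succ = (v (i+1)).castSucc) := by
      intro i
      constructor <;> intro hsb
      · obtain ⟨e1, e2⟩ := (hmatch i).1 hsb
        constructor
        · exact hp.injective ((hporb _).symm.trans (Subtype.ext e1))
        · exact hp.injective ((hporb _).symm.trans (Subtype.ext e2))
      · obtain ⟨e1, e2⟩ := (hmatch i).2 hsb
        constructor
        · exact hp.injective ((hporb _).symm.trans (Subtype.ext e1))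
        · exact hp.injective ((hporb _).symm.trans (Subtype.ext e2))
    -- the orbit of the endpoints of J (v 0)
    have hstepτ : ∀ (i : ℕ) (x : Fin (n+1)), (τ^(i+1)) x = τ ((τ^i) x) := by
      intro i x; rw [pow_succ']; rfl
    have horb : ∀ i : ℕ,
        ((τ^i) (v 0).castSucc = (v i).castSucc ∧ (τ^i) (v 0).succ = (v i).succ) ∨
        ((τ^i) (v 0).castSucc = (v i).succ ∧ (τ^i) (v 0).succ = (v i).castSucc) := by
      intro i
      induction i with
      | zero => left; constructor <;> simp
      | succ i ih =>
        rcases ih with ⟨e1, e2⟩ | ⟨e1, e2⟩ <;> cases hsb : s i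
        · right
          constructor
          · rw [hstepτ, e1, ((hτm i).2 hsb).1]
          · rw [hstepτ, e2, ((hτm i).2 hsb).2]
        · left
          constructor
          · rw [hstepτ, e1, ((hτm i).1 hsb).1]
          · rw [hstepτ, e2, ((hτm i).1 hsb).2]
        · left
          constructor
          · rw [hstepτ, e1, ((hτm i).2 hsb).2]
          · rw [hstepτ, e2, ((hτm i).2 hsb).1]
        · right
          constructor
          · rw [hstepτ, e1, ((hτm i).1 hsb).2]
          · rw [hstepτ, e2, ((hτm i).1 hsb).1]
    -- the iterates are affine on J (v 0)
    have haffJ : ∀ j : ℕ, ∃ C : ℝ, ∀ x : II,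
        (p (v 0).castSucc : ℝ) ≤ (x:ℝ) → (x:ℝ) ≤ (p (v 0).succ : ℝ) →
        ((f^[j] x : ℝ) = (∏ i ∈ Finset.range j, Aw (v i)) * x + C ∧
         (p (v j).castSucc : ℝ) ≤ (f^[j] x : ℝ) ∧ (f^[j] x : ℝ) ≤ (p (v j).succ : ℝ)) := by
      intro j
      induction j with
      | zero =>
        exact ⟨0, fun x h1 h2 => ⟨by simp, by simpa using h1, by simpa using h2⟩⟩
      | succ j ih =>
        obtain ⟨C, hC⟩ := ih
        refine ⟨Aw (v j) * C + Bw (v j), ?_⟩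
        intro x h1 h2
        obtain ⟨hf, hb1, hb2⟩ := hC x h1 h2
        have hy := hfstepw (v j) (f^[j] x) hb1 hb2
        have hnext' : f^[j+1] x = f (f^[j] x) := Function.iterate_succ_apply' f j x
        have hLval := hfstepw (v j) (p (v j).castSucc) (le_refl _) (le_of_lt (hlrw (v j)))
        have hRval := hfstepw (v j) (p (v j).succ) (le_of_lt (hlrw (v j))) (le_refl _)
        refine ⟨?_, ?_, ?_⟩
        · rw [hnext', hy, hf, Finset.prod_range_succ]
          ring
        · rw [hnext', hy]
          cases hsb : s j
          · obtain ⟨e1, e2⟩ := (hmatch j).2 hsb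
            have hA := hAvneg j hsb
            rw [← e2, hRval]
            nlinarith [hb2]
          · obtain ⟨e1, e2⟩ := (hmatch j).1 hsb
            have hA := hAvpos j hsb
            rw [← e1, hLval]
            nlinarith [hb1]
        · rw [hnext', hy]
          cases hsb : s j
          · obtain ⟨e1, e2⟩ := (hmatch j).2 hsb
            have hA := hAvneg j hsb
            rw [← e1, hLval]
            nlinarith [hb1]
          · obtain ⟨e1, e2⟩ := (hmatch j).1 hsb
            have hA := hAvpos j hsb
            rw [← e2, hRval]
            nlinarith [hb2]
    -- the product of slopes over 2d steps is 1
    have hvdd : ∀ i : ℕ, v (d + i) = v i := fun i => by rw [Nat.add_comm]; exact hvd i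
    have hLam2 : (∏ i ∈ Finset.range (2*d), Aw (v i)) = 1 := by
      rw [(by ring : 2*d = d + d), Finset.prod_range_add]
      have h2 : (∏ i ∈ Finset.range d, Aw (v (d + i))) = ∏ i ∈ Finset.range d, Aw (v i) :=
        Finset.prod_congr rfl (fun i _ => by rw [hvdd])
      rw [h2, hLam]
      norm_num
    -- bounds for the point u0 = f^[a0] (q 0)
    have hu0b1 : (p (v 0).castSucc : ℝ) < f^[a0] (q 0) := by
      have := (hbnd 0 a0 ha0).1
      rwa [show f^[0+a0] (q 0) = f^[a0] (q 0) from idx _ _ (Nat.zero_add a0)] at this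
    have hu0b2 : ((f^[a0] (q 0)) : ℝ) < p (v 0).succ := by
      have := (hbnd 0 a0 ha0).2
      rwa [show f^[0+a0] (q 0) = f^[a0] (q 0) from idx _ _ (Nat.zero_add a0)] at this
    -- f^[2d] is the identity on J (v 0)
    have hid2d : ∀ x : II, (p (v 0).castSucc : ℝ) ≤ x → (x:ℝ) ≤ p (v 0).succ →
        (f^[2*d] x : ℝ) = x := by
      obtain ⟨C, hC⟩ := haffJ (2*d)
      have hfix : f^[2*d] (f^[a0] (q 0)) = f^[a0] (q 0) := by
        rw [← Function.iterate_add_apply, idx _ _ (by omega : 2*d + a0 = a0 + (k+1)),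
          Function.iterate_add_apply, hQper]
      have h0 := (hC (f^[a0] (q 0)) (le_of_lt hu0b1) (le_of_lt hu0b2)).1
      rw [hfix, hLam2] at h0
      have hCzero : C = 0 := by linarith
      intro x h1 h2
      rw [(hC x h1 h2).1, hLam2, hCzero]
      ring
    -- hence τ^(2d) fixes the left endpoint and (n+1) ∣ 2d
    have hfixL : (τ^(2*d)) (v 0).castSucc = (v 0).castSucc := by
      apply hp.injective
      rw [← hPit]
      exact Subtype.ext (hid2d (p (v 0).castSucc) (le_refl _) (le_of_lt (hlrw (v 0))))
    have hdvt : (n+1) ∣ 2*d := (cyclic_period_iff τ hτ _ (2*d)).1 hfixL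
    have hτfix : ∀ a : Fin (n+1), (τ^(n+1)) a = a :=
      fun a => (cyclic_period_iff τ hτ a (n+1)).2 dvd_rfl
    -- f^[n+1] is the identity on J (v 0)
    have hidt : ∀ x : II, (p (v 0).castSucc : ℝ) ≤ x → (x:ℝ) ≤ p (v 0).succ →
        (f^[n+1] x : ℝ) = x := by
      obtain ⟨C, hC⟩ := haffJ (n+1)
      have hLfix : ((f^[n+1] (p (v 0).castSucc)) : ℝ) = p (v 0).castSucc := by
        rw [hPit, hτfix]
      have hRfix : ((f^[n+1] (p (v 0).succ)) : ℝ) = p (v 0).succ := by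
        rw [hPit, hτfix]
      have hL := (hC (p (v 0).castSucc) (le_refl _) (le_of_lt (hlrw (v 0)))).1
      have hR := (hC (p (v 0).succ) (le_of_lt (hlrw (v 0))) (le_refl _)).1
      rw [hLfix] at hL
      rw [hRfix] at hR
      have hne2 : ((p (v 0).succ : ℝ) - p (v 0).castSucc) ≠ 0 :=
        ne_of_gt (by have := hlrw (v 0); linarith)
      have hslope : (∏ i ∈ Finset.range (n+1), Aw (v i)) = 1 := by
        have h3 : (∏ i ∈ Finset.range (n+1), Aw (v i)) *
            ((p (v 0).succ : ℝ) - p (v 0).castSucc)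
            = 1 * ((p (v 0).succ : ℝ) - p (v 0).castSucc) := by linarith
        exact mul_right_cancel₀ hne2 h3
      have hCzero : C = 0 := by rw [hslope] at hL; linarith
      intro x h1 h2
      rw [(hC x h1 h2).1, hslope, hCzero]
      ring
    -- therefore n + 1 = k + 1 = 2d
    have hufix : f^[n+1] (f^[a0] (q 0)) = f^[a0] (q 0) :=
      Subtype.ext (hidt (f^[a0] (q 0)) (le_of_lt hu0b1) (le_of_lt hu0b2))
    have hkdvd : (k+1) ∣ (n+1) := by
      have h1 : f^[(n+1) + a0] (q 0) = f^[a0] (q 0) := by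
        rw [Function.iterate_add_apply, hufix]
      rw [hXq, hXq] at h1
      have h2 := hq.injective h1
      rw [pow_add, Equiv.Perm.mul_apply] at h2
      exact (cyclic_period_iff ν hν _ (n+1)).1 h2
    have hnk : n = k := by
      have h1 := Nat.le_of_dvd (by omega) hdvt
      have h2 := Nat.le_of_dvd (by omega) hkdvd
      omega
    subst hnk
    have hnodd : n % 2 = 1 := by omega
    -- injectivity of the endpoint orbits within one period
    have hginj : ∀ (x : Fin (n+1)) (i1 i2 : ℕ), i1 < 2*d → i2 < 2*d →
        (τ^i1) x = (τ^i2) x → i1 = i2 := by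
      have hbase : ∀ (x : Fin (n+1)) (i1 i2 : ℕ), i1 ≤ i2 → i2 < 2*d →
          (τ^i1) x = (τ^i2) x → i1 = i2 := by
        intro x i1 i2 hle hlt2 he
        have h5 : (τ^i2) x = (τ^i1) ((τ^(i2-i1)) x) := by
          rw [← Equiv.Perm.mul_apply, ← pow_add]
          congr 2
          omega
        rw [h5] at he
        have h6 : (τ^(i2-i1)) x = x := ((τ^i1).injective he).symm
        have h7 := (cyclic_period_iff τ hτ x (i2-i1)).1 h6
        rcases Nat.eq_zero_or_pos (i2 - i1) with h8 | h8
        · omega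
        · have := Nat.le_of_dvd h8 h7
          omega
      intro x i1 i2 h1 h2 he
      rcases le_total i1 i2 with h | h
      · exact hbase x i1 i2 h h2 he
      · exact (hbase x i2 i1 h h1 he.symm).symm
    -- each P-point appears at most twice as an endpoint along one period of the loop
    have hTcard : ∀ a : Fin (n+1),
        ((Finset.range (2*d)).filter (fun i => (v i).castSucc = a ∨ (v i).succ = a)).card ≤ 2 := by
      intro a
      have hsub : (Finset.range (2*d)).filter (fun i => (v i).castSucc = a ∨ (v i).succ = a) ⊆
          ((Finset.range (2*d)).filter (fun i => (τ^i) (v 0).castSucc = a)) ∪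
          ((Finset.range (2*d)).filter (fun i => (τ^i) (v 0).succ = a)) := by
        intro i hi
        rw [Finset.mem_filter] at hi
        rcases horb i with ⟨e1, e2⟩ | ⟨e1, e2⟩ <;> rcases hi.2 with h | h
        · exact Finset.mem_union_left _ (Finset.mem_filter.2 ⟨hi.1, by rw [e1, h]⟩)
        · exact Finset.mem_union_right _ (Finset.mem_filter.2 ⟨hi.1, by rw [e2, h]⟩)
        · exact Finset.mem_union_right _ (Finset.mem_filter.2 ⟨hi.1, by rw [e2, h]⟩)
        · exact Finset.mem_union_left _ (Finset.mem_filter.2 ⟨hi.1, by rw [e1, h]⟩)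
      have hc1 : ((Finset.range (2*d)).filter (fun i => (τ^i) (v 0).castSucc = a)).card ≤ 1 := by
        rw [Finset.card_le_one]
        intro i hi j hj
        rw [Finset.mem_filter, Finset.mem_range] at hi hj
        exact hginj (v 0).castSucc i j hi.1 hj.1 (hi.2.trans hj.2.symm)
      have hc2 : ((Finset.range (2*d)).filter (fun i => (τ^i) (v 0).succ = a)).card ≤ 1 := by
        rw [Finset.card_le_one]
        intro i hi j hj
        rw [Finset.mem_filter, Finset.mem_range] at hi hj
        exact hginj (v 0).succ i j hi.1 hj.1 (hi.2.trans hj.2.symm)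
      have h4 := Finset.card_le_card hsub
      have h3 := Finset.card_union_le
        ((Finset.range (2*d)).filter (fun i => (τ^i) (v 0).castSucc = a))
        ((Finset.range (2*d)).filter (fun i => (τ^i) (v 0).succ = a))
      omega
    have hfib2 : ∀ w : Fin n, ((Finset.range (2*d)).filter (fun i => v i = w)).card ≤ 2 := by
      intro w
      refine le_trans (Finset.card_le_card ?_) (hTcard w.castSucc)
      intro i hi
      rw [Finset.mem_filter] at hi ⊢
      exact ⟨hi.1, Or.inl (by rw [hi.2])⟩
    -- no interval of the loop is adjacent to another
    have hnoadj : ∀ i1 i2 : ℕ, (v i1).succ ≠ (v i2).castSucc := by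
      intro i1 i2 he
      have hv1 : v (i1 % d) = v i1 := (hvmod i1).symm
      have hv2 : v (i2 % d) = v i2 := (hvmod i2).symm
      have hj1 : i1 % d < d := Nat.mod_lt _ hd0
      have hj2 : i2 % d < d := Nat.mod_lt _ hd0
      have hvne : v i1 ≠ v i2 := by
        intro hcon
        rw [hcon] at he
        have h9 : ((v i2).succ : Fin (n+1)).val = ((v i2).castSucc : Fin (n+1)).val := by
          rw [he]
        simp only [Fin.val_succ, Fin.coe_castSucc] at h9
        omega
      have hne12 : i1 % d ≠ i2 % d := fun hcon => hvne (by rw [← hv1, hcon, hv2])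
      have hS : ({i1 % d, i1 % d + d, i2 % d, i2 % d + d} : Finset ℕ) ⊆
          (Finset.range (2*d)).filter
            (fun i => (v i).castSucc = (v i1).succ ∨ (v i).succ = (v i1).succ) := by
        intro i' hi'
        simp only [Finset.mem_insert, Finset.mem_singleton] at hi'
        rw [Finset.mem_filter, Finset.mem_range]
        constructor
        · rcases hi' with rfl|rfl|rfl|rfl <;> omega
        · rcases hi' with rfl|rfl|rfl|rfl
          · exact Or.inr (by rw [hv1])
          · exact Or.inr (by rw [hvd, hv1])
          · exact Or.inl (by rw [hv2, ← he])
          · exact Or.inl (by rw [hvd, hv2, ← he])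
      have hcardS : ({i1 % d, i1 % d + d, i2 % d, i2 % d + d} : Finset ℕ).card = 4 := by
        rw [Finset.card_insert_of_notMem (by
            simp only [Finset.mem_insert, Finset.mem_singleton]
            push_neg
            refine ⟨by omega, by omega, by omega⟩),
          Finset.card_insert_of_notMem (by
            simp only [Finset.mem_insert, Finset.mem_singleton]
            push_neg
            refine ⟨by omega, by omega⟩),
          Finset.card_insert_of_notMem (by
            simp only [Finset.mem_singleton]
            omega),
          Finset.card_singleton]
      have h1 := Finset.card_le_card hS
      have h2 := hTcard (v i1).succ
      omega
    -- every even index is the left endpoint of a loop interval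
    have hcover : ∀ a : Fin (n+1), ∃ i, i < 2*d ∧ ((v i).castSucc = a ∨ (v i).succ = a) := by
      intro a
      obtain ⟨c, hc⟩ := hτ (v 0).castSucc a
      have hmodfix : (τ^(c % (n+1))) (v 0).castSucc = a := by
        rw [← perm_pow_mod τ _ (hτfix _) (by omega) c, hc]
      refine ⟨c % (n+1), by have := Nat.mod_lt c (show 0 < n+1 by omega); omega, ?_⟩
      rcases horb (c % (n+1)) with ⟨e1, _⟩ | ⟨e1, _⟩
      · exact Or.inl (by rw [← e1, hmodfix])
      · exact Or.inr (by rw [← e1, hmodfix])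
    have hpar : ∀ c : ℕ, 2*c < n+1 → ∃ i, i < 2*d ∧ ((v i) : ℕ) = 2*c := by
      intro c
      induction c with
      | zero =>
        intro h0
        obtain ⟨i, hi, hcase⟩ := hcover ⟨0, by omega⟩
        refine ⟨i, hi, ?_⟩
        rcases hcase with h | h
        · have h9 : ((v i).castSucc : Fin (n+1)).val = 0 := by rw [h]
          simpa using h9
        · exfalso
          have h9 : ((v i).succ : Fin (n+1)).val = 0 := by rw [h]
          simp [Fin.val_succ] at h9
      | succ c ih =>
        intro hlt2
        obtain ⟨i', hi', hval'⟩ := ih (by omega)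
        obtain ⟨i, hi, hcase⟩ := hcover ⟨2*c+2, by omega⟩
        rcases hcase with h | h
        · refine ⟨i, hi, ?_⟩
          have h9 : ((v i).castSucc : Fin (n+1)).val = 2*c+2 := by rw [h]
          simp only [Fin.coe_castSucc] at h9
          omega
        · exfalso
          have h9 : ((v i).succ : Fin (n+1)).val = 2*c+2 := by rw [h]
          simp only [Fin.val_succ] at h9
          exact hnoadj i' i (Fin.ext (by
            simp only [Fin.val_succ, Fin.coe_castSucc]
            omega))
    have heven : ∀ i : ℕ, ((v i) : ℕ) % 2 = 0 := by
      intro i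
      by_contra hodd
      have h1 : ((v i):ℕ) % 2 = 1 := by omega
      have h2 : 2*(((v i):ℕ)/2) < n+1 := by have := (v i).isLt; omega
      obtain ⟨i', _, hval'⟩ := hpar (((v i):ℕ)/2) h2
      exact hnoadj i' i (Fin.ext (by
        simp only [Fin.val_succ, Fin.coe_castSucc]
        omega))
    -- locating the points of Q
    have hqi : ∀ x : Fin (n+1), ∃ i, i < 2*d ∧ q x = f^[i] (q 0) := by
      intro x
      obtain ⟨c, hc⟩ := hν 0 x
      refine ⟨c % (n+1), by have := Nat.mod_lt c (show 0 < n+1 by omega); omega, ?_⟩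
      rw [hXq, ← perm_pow_mod ν _ ((cyclic_period_iff ν hν 0 (n+1)).2 dvd_rfl) (by omega) c, hc]
    choose θ hθ using hqi
    have hqb : ∀ x : Fin (n+1), (p (v (θ x)).castSucc : ℝ) < q x ∧
        ((q x : II) : ℝ) < p (v (θ x)).succ := by
      intro x
      constructor
      · have h1 := (hv (θ x)).1; rwa [← (hθ x).2] at h1
      · have h1 := (hv (θ x)).2; rwa [← (hθ x).2] at h1
    have hθinj : ∀ x y : Fin (n+1), θ x = θ y → x = y := by
      intro x y he
      apply hq.injective
      rw [(hθ x).2, (hθ y).2, he]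
    have hUfib : ∀ w : Fin n,
        (Finset.univ.filter (fun x : Fin (n+1) => v (θ x) = w)).card ≤ 2 := by
      intro w
      refine le_trans (Finset.card_le_card_of_injOn θ ?_ ?_) (hfib2 w)
      · intro x hx
        rw [Finset.mem_coe] at hx ⊢
        rw [Finset.mem_filter] at hx
        rw [Finset.mem_filter, Finset.mem_range]
        exact ⟨(hθ x).1, hx.2⟩
      · intro x _ y _ h
        exact hθinj x y h
    have hUmono : Monotone (fun x : Fin (n+1) =>
        (⟨((v (θ x)) : ℕ)/2, by have := (v (θ x)).isLt; omega⟩ : Fin d)) := by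
      intro x y hxy
      by_contra hcon
      push_neg at hcon
      rw [Fin.lt_def] at hcon
      simp only [] at hcon
      have h3 : ((v (θ y)).succ : Fin (n+1)) ≤ (v (θ x)).castSucc := by
        rw [Fin.le_def]
        simp only [Fin.val_succ, Fin.coe_castSucc]
        omega
      have h4 := hpR.monotone h3
      have h5 := (hqb y).2
      have h6 := (hqb x).1
      have h8 : ((q y : II) : ℝ) < q x := by linarith
      have h7 : y < x := hq.lt_iff_lt.1 (by exact_mod_cast h8)
      exact absurd h7 (not_lt.2 hxy)
    have hUval : ∀ x : Fin (n+1), ((v (θ x)) : ℕ) = 2 * ((x : ℕ) / 2) := by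
      have hfibφ : ∀ w : Fin d, (Finset.univ.filter (fun x : Fin (n+1) =>
          (⟨((v (θ x)) : ℕ)/2, by have := (v (θ x)).isLt; omega⟩ : Fin d) = w)).card ≤ 2 := by
        intro w
        have h2w : 2 * (w:ℕ) < n := by have := w.isLt; omega
        refine le_trans (Finset.card_le_card ?_) (hUfib ⟨2*(w:ℕ), h2w⟩)
        intro x hx
        rw [Finset.mem_filter] at hx ⊢
        refine ⟨Finset.mem_univ _, ?_⟩
        have h3 : ((v (θ x)) : ℕ)/2 = (w:ℕ) := by
          have h5 := congrArg Fin.val hx.2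
          simpa using h5
        have h4 := heven (θ x)
        exact Fin.ext (by simp only []; omega)
      have h1 := monotone_two_to_one (show n+1 = 2*d by omega) _ hUmono hfibφ
      intro x
      have h2 := h1 x
      simp only [] at h2
      have h4 := heven (θ x)
      omega
    have hqloc : ∀ (x : Fin (n+1)) (c : ℕ) (_ : (x:ℕ)/2 = c) (h1 : 2*c < n+1),
        (p ⟨2*c, by omega⟩ : ℝ) < q x ∧ ((q x : II):ℝ) < p ⟨2*c+1, by omega⟩ := by
      intro x c hc h1
      have h2 := hqb x
      have h3 := hUval x
      have e1 : ((v (θ x)).castSucc : Fin (n+1)) = ⟨2*c, by omega⟩ :=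
        Fin.ext (by simp only [Fin.coe_castSucc]; omega)
      have e2 : ((v (θ x)).succ : Fin (n+1)) = ⟨2*c+1, by omega⟩ :=
        Fin.ext (by simp only [Fin.val_succ]; omega)
      rw [e1, e2] at h2
      exact h2
    have hqinv : ∀ (x : Fin (n+1)) (c : ℕ) (h1 : 2*c < n+1),
        ((p (⟨2*c, by omega⟩ : Fin (n+1)) : ℝ) < q x) →
        (((q x : II):ℝ) < p (⟨2*c+1, by omega⟩ : Fin (n+1))) →
        (x:ℕ)/2 = c := by
      intro x c h1 hlo hhi
      by_contra hcon
      have h2 := hqloc x ((x:ℕ)/2) rfl (by have := x.isLt; omega)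
      rcases Nat.lt_or_ge ((x:ℕ)/2) c with h | h
      · have h3 : (p (⟨2*((x:ℕ)/2)+1, by have := x.isLt; omega⟩ : Fin (n+1)) : ℝ) ≤
            p (⟨2*c, by omega⟩ : Fin (n+1)) :=
          hpR.monotone (by rw [Fin.mk_le_mk]; omega)
        linarith [h2.2]
      · have h4 : c < (x:ℕ)/2 := by omega
        have h3 : (p (⟨2*c+1, by omega⟩ : Fin (n+1)) : ℝ) ≤
            p (⟨2*((x:ℕ)/2), by have := x.isLt; omega⟩ : Fin (n+1)) :=
          hpR.monotone (by rw [Fin.mk_le_mk]; omega)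
        linarith [h2.1]
    -- finally : the patterns must coincide
    apply hne
    refine ⟨rfl, ?_⟩
    intro a b hab
    have hab' : a = b := Fin.ext hab
    subst hab'
    obtain ⟨i, hi2d, hival⟩ := hpar ((a:ℕ)/2) (by have := a.isLt; omega)
    set c := (a:ℕ)/2 with hcdef
    set xL : Fin (n+1) := ⟨2*c, by have := a.isLt; omega⟩ with hxLdef
    set xR : Fin (n+1) := ⟨2*c+1, by have := a.isLt; omega⟩ with hxRdef
    have hvicast : ((v i).castSucc : Fin (n+1)) = xL :=
      Fin.ext (by simp only [Fin.coe_castSucc]; exact hival)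
    have hvisucc : ((v i).succ : Fin (n+1)) = xR :=
      Fin.ext (by simp only [Fin.val_succ, hxRdef, Fin.val_mk]; omega)
    have hbL : (p xL : ℝ) < q xL ∧ ((q xL : II):ℝ) < p xR :=
      hqloc xL c (by show (2*c)/2 = c; omega) (by have := a.isLt; omega)
    have hbR : (p xL : ℝ) < q xR ∧ ((q xR : II):ℝ) < p xR :=
      hqloc xR c (by show (2*c+1)/2 = c; omega) (by have := a.isLt; omega)
    have hJL : (p (v i).castSucc : ℝ) < q xL ∧ ((q xL : II):ℝ) < p (v i).succ := by
      rw [hvicast, hvisucc]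
      exact hbL
    have hJR : (p (v i).castSucc : ℝ) < q xR ∧ ((q xR : II):ℝ) < p (v i).succ := by
      rw [hvicast, hvisucc]
      exact hbR
    have hfL := hfstepw (v i) (q xL) (le_of_lt hJL.1) (le_of_lt hJL.2)
    have hfR := hfstepw (v i) (q xR) (le_of_lt hJR.1) (le_of_lt hJR.2)
    have hfLe := hfstepw (v i) (p (v i).castSucc) (le_refl _) (le_of_lt (hlrw (v i)))
    have hfRe := hfstepw (v i) (p (v i).succ) (le_of_lt (hlrw (v i))) (le_refl _)
    have hqLR : ((q xL : II) : ℝ) < q xR := by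
      have h5 : xL < xR := by rw [Fin.lt_def]; show 2*c < 2*c+1; omega
      exact_mod_cast hq h5
    set c' := ((v (i+1)) : ℕ)/2 with hc'def
    have hival' : ((v (i+1)) : ℕ) = 2*c' := by have := heven (i+1); omega
    have h2c' : 2*c' < n+1 := by have := (v (i+1)).isLt; omega
    have hvicast' : ((v (i+1)).castSucc : Fin (n+1)) = ⟨2*c', by omega⟩ :=
      Fin.ext (by simp only [Fin.coe_castSucc]; omega)
    have hvisucc' : ((v (i+1)).succ : Fin (n+1)) = ⟨2*c'+1, by omega⟩ :=
      Fin.ext (by simp only [Fin.val_succ]; omega)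
    have haval : (a:ℕ) = 2*c ∨ (a:ℕ) = 2*c+1 := by omega
    cases hsb : s i
    case false =>
      obtain ⟨t1, t2⟩ := (hτm i).2 hsb
      obtain ⟨e1, e2⟩ := (hmatch i).2 hsb
      have hA := hAvneg i hsb
      have hlt1 : (f (q xR) : ℝ) < f (q xL) := by
        rw [hfL, hfR]; nlinarith [hqLR, hA]
      have hlow : (p (v (i+1)).castSucc : ℝ) < f (q xR) := by
        rw [← e2, hfRe, hfR]; nlinarith [hJR.2, hA]
      have hhigh : (f (q xL) : ℝ) < p (v (i+1)).succ := by
        rw [← e1, hfLe, hfL]; nlinarith [hJL.1, hA]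
      have hqvL : (p (v (i+1)).castSucc : ℝ) < q (ν xL) ∧
          ((q (ν xL) : II):ℝ) < p (v (i+1)).succ := by
        constructor
        · rw [← hqorb xL]; exact lt_trans hlow hlt1
        · rw [← hqorb xL]; exact hhigh
      have hqvR : (p (v (i+1)).castSucc : ℝ) < q (ν xR) ∧
          ((q (ν xR) : II):ℝ) < p (v (i+1)).succ := by
        constructor
        · rw [← hqorb xR]; exact hlow
        · rw [← hqorb xR]; exact lt_trans hlt1 hhigh
      have hνL := hqinv (ν xL) c' h2c' (by rw [← hvicast']; exact hqvL.1)
        (by rw [← hvisucc']; exact hqvL.2)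
      have hνR := hqinv (ν xR) c' h2c' (by rw [← hvicast']; exact hqvR.1)
        (by rw [← hvisucc']; exact hqvR.2)
      have hordν : (ν xR : Fin (n+1)) < ν xL := by
        apply hq.lt_iff_lt.1
        have h5 : ((q (ν xR) : II) : ℝ) < q (ν xL) := by
          rw [← hqorb, ← hqorb]; exact hlt1
        exact_mod_cast h5
      rw [Fin.lt_def] at hordν
      have hvalL : ((ν xL):ℕ) = 2*c'+1 := by omega
      have hvalR : ((ν xR):ℕ) = 2*c' := by omega
      have hτL : ((τ xL : Fin (n+1)):ℕ) = 2*c'+1 := by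
        rw [← hvicast, t1, hvisucc']
      have hτR : ((τ xR : Fin (n+1)):ℕ) = 2*c' := by
        rw [← hvisucc, t2, hvicast']
      rcases haval with h | h
      · have h6 : a = xL := Fin.ext (by rw [hxLdef]; exact h)
        rw [h6, hτL, hvalL]
      · have h6 : a = xR := Fin.ext (by rw [hxRdef]; exact h)
        rw [h6, hτR, hvalR]
    case true =>
      obtain ⟨t1, t2⟩ := (hτm i).1 hsb
      obtain ⟨e1, e2⟩ := (hmatch i).1 hsb
      have hA := hAvpos i hsb
      have hlt1 : (f (q xL) : ℝ) < f (q xR) := by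
        rw [hfL, hfR]; nlinarith [hqLR, hA]
      have hlow : (p (v (i+1)).castSucc : ℝ) < f (q xL) := by
        rw [← e1, hfLe, hfL]; nlinarith [hJL.1, hA]
      have hhigh : (f (q xR) : ℝ) < p (v (i+1)).succ := by
        rw [← e2, hfRe, hfR]; nlinarith [hJR.2, hA]
      have hqvL : (p (v (i+1)).castSucc : ℝ) < q (ν xL) ∧
          ((q (ν xL) : II):ℝ) < p (v (i+1)).succ := by
        constructor
        · rw [← hqorb xL]; exact hlow
        · rw [← hqorb xL]; exact lt_trans hlt1 hhigh
      have hqvR : (p (v (i+1)).castSucc : ℝ) < q (ν xR) ∧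
          ((q (ν xR) : II):ℝ) < p (v (i+1)).succ := by
        constructor
        · rw [← hqorb xR]; exact lt_trans hlow hlt1
        · rw [← hqorb xR]; exact hhigh
      have hνL := hqinv (ν xL) c' h2c' (by rw [← hvicast']; exact hqvL.1)
        (by rw [← hvisucc']; exact hqvL.2)
      have hνR := hqinv (ν xR) c' h2c' (by rw [← hvicast']; exact hqvR.1)
        (by rw [← hvisucc']; exact hqvR.2)
      have hordν : (ν xL : Fin (n+1)) < ν xR := by
        apply hq.lt_iff_lt.1
        have h5 : ((q (ν xL) : II) : ℝ) < q (ν xR) := by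
          rw [← hqorb, ← hqorb]; exact hlt1
        exact_mod_cast h5
      rw [Fin.lt_def] at hordν
      have hvalL : ((ν xL):ℕ) = 2*c' := by omega
      have hvalR : ((ν xR):ℕ) = 2*c'+1 := by omega
      have hτL : ((τ xL : Fin (n+1)):ℕ) = 2*c' := by
        rw [← hvicast, t1, hvicast']
      have hτR : ((τ xR : Fin (n+1)):ℕ) = 2*c'+1 := by
        rw [← hvisucc, t2, hvisucc']
      rcases haval with h | h
      · have h6 : a = xL := Fin.ext (by rw [hxLdef]; exact h)
        rw [h6, hτL, hvalL]
      · have h6 : a = xR := Fin.ext (by rw [hxRdef]; exact h)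
        rw [h6, hτR, hvalR]




  · -- uniqueness
    intro v' s' hloop' hassoc' i
    have hv'eq : ∀ j : ℕ, v' j = v j := by
      intro j
      have h1 := (hassoc'.2.2 j).1
      have h2 := (hassoc'.2.2 j).2
      exact vuniq j (v' j) (by exact_mod_cast h1) (by exact_mod_cast h2)
    refine ⟨hv'eq i, ?_⟩
    by_contra hne2
    have harr' := hloop'.2.2.2 i
    rw [hv'eq i, hv'eq (i+1)] at harr'
    have harr := harrow i
    have hLRn : (p (v (i+1)).castSucc : ℝ) < p (v (i+1)).succ := hLR (i+1)
    have hsne : s' i = !(s i) := by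
      cases hcs : s i <;> cases hcs' : s' i
      · exact absurd (hcs'.trans hcs.symm) hne2
      · rfl
      · rfl
      · exact absurd (hcs'.trans hcs.symm) hne2
    rw [hsne] at harr'
    cases hsb : s i
    · rw [hsb] at harr harr'
      simp only [Bool.not_false] at harr'
      have a := IArrow_false_elim harr
      have b := IArrow_true_elim harr'
      linarith [a.1, a.2, b.1, b.2]
    · rw [hsb] at harr harr'
      simp only [Bool.not_true] at harr'
      have a := IArrow_true_elim harr
      have b := IArrow_false_elim harr'
      linarith [a.1, a.2, b.1, b.2]
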